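/- arXiv:1402.0221 — 10 statements merged into one kernel-verified Lean document; each statement's English description precedes it below -/
import Mathlib

section
/- Let n = p^μ be a prime power with μ ≥ 2 and let α = n/p. If v is an integer with 1 ≤ v ≤ n−1 and gcd(v, p) = 1, then there exists an integer t with 0 ≤ t ≤ p−1 such that y = 1 + tα is a unit modulo n and the least positive residue of v·y modulo n is strictly less than n/p. -/
/-- `lpr n x` is the least positive residue of `x` modulo `n` (in `[1, n]`). -/
def lpr (n x : ℕ) : ℕ := if x % n = 0 then n else x % n

theorem stmt_0 (p μ n α : ℕ) (hp : p.Prime) (hμ : 2 ≤ μ) (hn : n = p ^ μ)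
    (hα : α = n / p) (v : ℕ) (hv1 : 1 ≤ v) (hv2 : v ≤ n - 1)
    (hvp : Nat.gcd v p = 1) :
    ∃ t : ℕ, t ≤ p - 1 ∧ Nat.gcd (1 + t * α) n = 1 ∧
      lpr n (v * (1 + t * α)) < n / p := by
  haveI : Fact p.Prime := ⟨hp⟩
  have hpos : 0 < p := hp.pos
  have hα' : α = p ^ (μ - 1) := by
    have h := Nat.pow_div (show 1 ≤ μ by omega) hpos
    rw [pow_one] at h
    rw [hα, hn, h]
  have hnpα : n = p * α := by
    rw [hn, hα', ← pow_succ']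
    congr 1
    omega
  have hpα : p ∣ α := by
    rw [hα']
    exact dvd_pow_self p (by omega)
  have hαpos : 0 < α := by rw [hα']; positivity
  have hnotdvd : ¬ p ∣ v := by
    intro h
    have h1 : p ∣ Nat.gcd v p := Nat.dvd_gcd h dvd_rfl
    rw [hvp] at h1
    have := Nat.le_of_dvd one_pos h1
    have := hp.two_le
    omega
  set a := v / α with ha
  set b := v % α with hb
  have hvab : α * a + b = v := Nat.div_add_mod v α
  have hbne : b ≠ 0 := by
    intro h
    exact hnotdvd (hpα.trans (Nat.dvd_of_mod_eq_zero h))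
  have hblt : b < α := Nat.mod_lt v hαpos
  have hv0 : (v : ZMod p) ≠ 0 := by
    rw [Ne, ZMod.natCast_eq_zero_iff]
    exact hnotdvd
  set t := (-(a : ZMod p) * (v : ZMod p)⁻¹).val with htdef
  have htlt : t < p := ZMod.val_lt _
  have hcast : ((t : ℕ) : ZMod p) = -(a : ZMod p) * (v : ZMod p)⁻¹ := by
    simp [htdef, ZMod.natCast_val, ZMod.cast_id]
  have hdvd : p ∣ a + t * v := by
    have : ((a + t * v : ℕ) : ZMod p) = 0 := by
      push_cast
      rw [hcast]
      field_simp
      ring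
    exact (ZMod.natCast_eq_zero_iff _ _).mp this
  obtain ⟨k, hk⟩ := hdvd
  refine ⟨t, by omega, ?_, ?_⟩
  · have hcop : Nat.Coprime (1 + t * α) p := by
      rw [Nat.coprime_comm]
      rw [hp.coprime_iff_not_dvd]
      intro h
      have h1 : p ∣ t * α := Dvd.dvd.mul_left hpα t
      have : p ∣ 1 := (Nat.dvd_add_right h1).mp (by rwa [Nat.add_comm] at h)
      have := Nat.le_of_dvd one_pos this
      have := hp.two_le
      omega
    rw [hn]
    exact Nat.Coprime.pow_right _ hcop
  · have hmod : (v * (1 + t * α)) % n = b := by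
      have key : v * (1 + t * α) = b + k * n := by
        calc v * (1 + t * α) = (α * a + b) + t * v * α := by rw [hvab]; ring
          _ = b + (a + t * v) * α := by ring
          _ = b + (p * k) * α := by rw [hk]
          _ = b + k * n := by rw [hnpα]; ring
      rw [key, Nat.add_mul_mod_self_right]
      exact Nat.mod_eq_of_lt (lt_of_lt_of_le hblt (hnpα ▸ Nat.le_mul_of_pos_left α hpos))
    rw [show n / p = α from hα.symm]
    unfold lpr
    rw [hmod]
    simp [hbne, hblt]
end

section
/- Let n = p^μ with p ≥ 5 prime and μ ≥ 2, and let x1,...,x5 ∈ [1, n−1] with x1 + ... + x5 ≡ 0 (mod n), such that no proper nonempty subset of {x1,...,x5} has sum divisible by n, and gcd(n, x1, x2, x3, x4, x5) = 1. If at least three of the x_i are equal, then there exists a unit m modulo n with |m·x1|_n + |m·x2|_n + |m·x3|_n + |m·x4|_n + |m·x5|_n = n. -/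
lemma lpr_eq {n x : ℕ} (h : ¬ n ∣ x) : lpr n x = x % n := by
  rw [lpr, if_neg]
  rwa [Nat.dvd_iff_mod_eq_zero] at h

lemma lpr_pos {n x : ℕ} (h : ¬ n ∣ x) : 1 ≤ lpr n x := by
  rw [lpr_eq h]
  rcases Nat.eq_zero_or_pos (x % n) with h0 | h0
  · exact absurd (Nat.dvd_of_mod_eq_zero h0) h
  · exact h0

lemma finish5 (n a b c m : ℕ) (hn : 0 < n) (hm : Nat.Coprime m n)
    (hsum : n ∣ (a + a + a + b + c)) (hna : ¬ n ∣ a) (hnb : ¬ n ∣ b) (hnc : ¬ n ∣ c)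
    (hS : 3 * ((m * a) % n) + (m * b) % n < n) :
    lpr n (m * a) + lpr n (m * a) + lpr n (m * a) + (lpr n (m * b) + lpr n (m * c)) = n := by
  have key : ∀ y : ℕ, ¬ n ∣ y → ¬ n ∣ m * y := by
    intro y hy hdvd
    exact hy (hm.symm.dvd_of_dvd_mul_left hdvd)
  have hma := key a hna
  have hmb := key b hnb
  have hmc := key c hnc
  rw [lpr_eq hma, lpr_eq hmb, lpr_eq hmc]
  set A := (m * a) % n with hA
  set B := (m * b) % n with hB
  set C := (m * c) % n with hC
  have hApos : 0 < A := by
    rcases Nat.eq_zero_or_pos A with h0 | h0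
    · exact absurd (Nat.dvd_of_mod_eq_zero h0) hma
    · exact h0
  have hBpos : 0 < B := by
    rcases Nat.eq_zero_or_pos B with h0 | h0
    · exact absurd (Nat.dvd_of_mod_eq_zero h0) hmb
    · exact h0
  have hCpos : 0 < C := by
    rcases Nat.eq_zero_or_pos C with h0 | h0
    · exact absurd (Nat.dvd_of_mod_eq_zero h0) hmc
    · exact h0
  have hClt : C < n := Nat.mod_lt _ hn
  have hdvd : n ∣ (A + A + A + (B + C)) := by
    have h1 : n ∣ m * (a + a + a + b + c) := hsum.mul_left m
    have h2 : ((A + A + A + (B + C) : ℕ) : ZMod n) = 0 := by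
      have h3 : ((m * (a + a + a + b + c) : ℕ) : ZMod n) = 0 :=
        (ZMod.natCast_eq_zero_iff _ _).mpr h1
      rw [hA, hB, hC]
      push_cast [ZMod.natCast_mod]
      push_cast at h3
      linear_combination h3
    exact (ZMod.natCast_eq_zero_iff _ _).mp h2
  obtain ⟨t, ht⟩ := hdvd
  have h2n : A + A + A + (B + C) < 2 * n := by omega
  rcases t with _ | _ | t
  · omega
  · omega
  · exfalso
    have h1 : 2 * n ≤ n * (t + 2) := by
      calc 2 * n = n * 2 := by ring
        _ ≤ n * (t + 2) := Nat.mul_le_mul_left n (by omega)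
    have h2 : n * (t + 1 + 1) = n * (t + 2) := by ring
    omega

lemma core (p μ n : ℕ) (hp : p.Prime) (hp5 : 5 ≤ p) (hμ : 2 ≤ μ) (hn : n = p ^ μ)
    (a b c : ℕ)
    (hna : ¬ n ∣ a) (hnb : ¬ n ∣ b) (hnc : ¬ n ∣ c)
    (hab : ¬ n ∣ (a + b)) (h2ab : ¬ n ∣ (a + a + b)) (h3ab : ¬ n ∣ (a + a + a + b))
    (hsum : n ∣ (a + a + a + b + c))
    (hgcd : ¬ (p ∣ a ∧ p ∣ b ∧ p ∣ c)) :
    ∃ m : ℕ, Nat.gcd m n = 1 ∧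
      lpr n (m * a) + lpr n (m * a) + lpr n (m * a) + (lpr n (m * b) + lpr n (m * c)) = n := by
  have hp1 : 1 < p := hp.one_lt
  have hn1 : 1 < n := by
    rw [hn]
    calc 1 < p := hp1
      _ = p ^ 1 := (pow_one p).symm
      _ ≤ p ^ μ := Nat.pow_le_pow_right (by omega) (by omega)
  have hn0 : 0 < n := by omega
  haveI : NeZero n := ⟨by omega⟩
  by_cases hpa : p ∣ a
  · -- case p ∣ a
    have ha0 : a ≠ 0 := by rintro rfl; exact hna (dvd_zero n)
    have hpb : ¬ p ∣ b := by
      intro hpbd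
      apply hgcd
      refine ⟨hpa, hpbd, ?_⟩
      have hpn : p ∣ n := by
        rw [hn]; exact dvd_pow_self p (by omega)
      have h1 : p ∣ (a + a + a + b + c) := hpn.trans hsum
      have h2 : p ∣ (a + a + a + b) :=
        dvd_add (dvd_add (dvd_add hpa hpa) hpa) hpbd
      exact (Nat.dvd_add_right h2).mp h1
    set α := a.factorization p with hα
    have hα1 : 1 ≤ α := hp.factorization_pos_of_dvd ha0 hpa
    have hαμ : α < μ := by
      by_contra h
      push_neg at h
      apply hna
      rw [hn]
      exact dvd_trans (pow_dvd_pow p h) (Nat.ordProj_dvd a p)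
    set a0 := a / p ^ α with ha0def
    have hfact : p ^ α * a0 = a := Nat.ordProj_mul_ordCompl_eq_self a p
    have hpa0 : ¬ p ∣ a0 := Nat.not_dvd_ordCompl hp ha0
    set q := p ^ (μ - α) with hq
    have hq1 : 1 < q := by
      rw [hq]
      calc 1 < p := hp1
        _ = p ^ 1 := (pow_one p).symm
        _ ≤ p ^ (μ - α) := Nat.pow_le_pow_right (by omega) (by omega)
    haveI : NeZero q := ⟨by omega⟩
    have hnq : n = p ^ α * q := by
      rw [hn, hq, ← pow_add]
      congr 1
      omega
    have hqn : q ∣ n := ⟨p ^ α, by rw [hnq]; ring⟩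
    have hbq : Nat.Coprime b q := by
      rw [hq]
      exact Nat.Coprime.pow_right _ ((hp.coprime_iff_not_dvd).mpr hpb).symm
    have hbn : Nat.Coprime b n := by
      rw [hn]
      exact Nat.Coprime.pow_right _ ((hp.coprime_iff_not_dvd).mpr hpb).symm
    have ha0q : Nat.Coprime a0 q := by
      rw [hq]
      exact Nat.Coprime.pow_right _ ((hp.coprime_iff_not_dvd).mpr hpa0).symm
    have hBq : IsUnit ((b : ℕ) : ZMod q) := (ZMod.isUnit_iff_coprime b q).mpr hbq
    have hA0q : IsUnit ((a0 : ℕ) : ZMod q) := (ZMod.isUnit_iff_coprime a0 q).mpr ha0q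
    set W : ZMod q := ((b : ℕ) : ZMod q) * ((a0 : ℕ) : ZMod q)⁻¹ with hW
    have hWu : IsUnit W := hBq.mul (IsUnit.of_mul_eq_one _ (ZMod.inv_mul_of_unit _ hA0q))
    set w := W.val with hwdef
    have hwcast : ((w : ℕ) : ZMod q) = W := by
      simp [hwdef, ZMod.natCast_val, ZMod.cast_id]
    have hwq : Nat.Coprime w q := by
      rw [← ZMod.isUnit_iff_coprime, hwcast]; exact hWu
    have hwlt : w < q := ZMod.val_lt W
    have hw1 : 1 ≤ w := by
      rcases Nat.eq_zero_or_pos w with h0 | h0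
      · exfalso
        rw [h0] at hwq
        have := Nat.coprime_zero_left q |>.mp hwq
        omega
      · exact h0
    have hwa0 : ((w : ℕ) : ZMod q) * ((a0 : ℕ) : ZMod q) = ((b : ℕ) : ZMod q) := by
      rw [hwcast, hW, mul_assoc, ZMod.inv_mul_of_unit _ hA0q, mul_one]
    have hBn : IsUnit ((b : ℕ) : ZMod n) := (ZMod.isUnit_iff_coprime b n).mpr hbn
    set Bi : ZMod n := ((b : ℕ) : ZMod n)⁻¹ with hBi
    have hBiu : IsUnit Bi := IsUnit.of_mul_eq_one _ (ZMod.inv_mul_of_unit _ hBn)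
    set v := Bi.val with hv
    have hvcast : ((v : ℕ) : ZMod n) = Bi := by
      simp [hv, ZMod.natCast_val, ZMod.cast_id]
    have hvb : ((v : ℕ) : ZMod n) * ((b : ℕ) : ZMod n) = 1 := by
      rw [hvcast]; exact ZMod.inv_mul_of_unit _ hBn
    have hvn : Nat.Coprime v n := by
      rw [← ZMod.isUnit_iff_coprime, hvcast]; exact hBiu
    have hv1 : 1 ≤ v := by
      rcases Nat.eq_zero_or_pos v with h0 | h0
      · exfalso
        rw [h0] at hvn
        have := Nat.coprime_zero_left n |>.mp hvn
        omega
      · exact h0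
    have hwn : Nat.Coprime w n := by
      rw [hn]
      apply Nat.Coprime.pow_right
      apply Nat.Coprime.symm
      apply (hp.coprime_iff_not_dvd).mpr
      intro hpw
      have hpq : p ∣ q := by rw [hq]; exact dvd_pow_self p (by omega)
      have : p ∣ Nat.gcd w q := Nat.dvd_gcd hpw hpq
      rw [hwq] at this
      exact hp.one_lt.ne' (Nat.dvd_one.mp this)
    set m := w * v with hmdef
    have hmn : Nat.Coprime m n := Nat.Coprime.mul hwn hvn
    refine ⟨m, hmn, ?_⟩
    apply finish5 n a b c m hn0 hmn hsum hna hnb hnc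
    have hqlen : q ≤ n := Nat.le_of_dvd hn0 hqn
    have hmb : (m * b) % n = w := by
      have h1 : ((m * b : ℕ) : ZMod n) = ((w : ℕ) : ZMod n) := by
        rw [hmdef]
        push_cast
        rw [mul_assoc, hvb, mul_one]
      have h2 := ZMod.val_natCast (n := n) (m * b)
      rw [h1, ZMod.val_natCast, Nat.mod_eq_of_lt (by omega)] at h2
      exact h2.symm
    have hX1 : q ∣ (w * v * a0 - 1) := by
      have hX : ((w * v * a0 : ℕ) : ZMod q) = 1 := by
        push_cast
        have hr : ((w : ℕ) : ZMod q) * v * a0 = (((w : ℕ) : ZMod q) * a0) * v := by ring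
        rw [hr, hwa0]
        have hcast := congrArg (ZMod.castHom hqn (ZMod q)) hvb
        simp only [map_mul, map_one, map_natCast] at hcast
        linear_combination hcast
      have hge : 1 ≤ w * v * a0 := by
        have ha0pos : 1 ≤ a0 := by
          rcases Nat.eq_zero_or_pos a0 with h0 | h0
          · exfalso; exact hpa0 (h0 ▸ dvd_zero p)
          · exact h0
        exact Nat.one_le_iff_ne_zero.mpr (by positivity)
      apply (ZMod.natCast_eq_zero_iff _ _).mp
      rw [Nat.cast_sub hge, hX, Nat.cast_one, sub_self]
    have hplt : p ^ α < n := by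
      rw [hn]
      exact Nat.pow_lt_pow_right hp1 hαμ
    have hma : (m * a) % n = p ^ α := by
      have hdvd2 : n ∣ (m * a - p ^ α) := by
        rw [hnq]
        have heq : m * a - p ^ α = p ^ α * (w * v * a0 - 1) := by
          rw [Nat.mul_sub, mul_one, hmdef, ← hfact]
          ring_nf
        rw [heq]
        exact Nat.mul_dvd_mul_left _ hX1
      have hple : p ^ α ≤ a := Nat.le_of_dvd (by omega) (Nat.ordProj_dvd a p)
      have hm1 : 1 ≤ m := by
        rw [hmdef]; exact Nat.one_le_iff_ne_zero.mpr (by positivity)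
      have hle2 : p ^ α ≤ m * a := le_trans hple (Nat.le_mul_of_pos_left a hm1)
      have hmod : p ^ α ≡ m * a [MOD n] := (Nat.modEq_iff_dvd' hle2).mpr hdvd2
      have : p ^ α % n = (m * a) % n := hmod
      rw [Nat.mod_eq_of_lt hplt] at this
      omega
    rw [hma, hmb]
    have hP : p ^ α ≤ p ^ (μ - 1) := Nat.pow_le_pow_right (by omega) (by omega)
    have hq2 : q ≤ p ^ (μ - 1) := by
      rw [hq]; exact Nat.pow_le_pow_right (by omega) (by omega)
    have h5 : 5 * p ^ (μ - 1) ≤ n := by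
      rw [hn]
      calc 5 * p ^ (μ - 1) ≤ p * p ^ (μ - 1) := Nat.mul_le_mul_right _ hp5
        _ = p ^ μ := by rw [← pow_succ']; congr 1; omega
    omega
  · -- case ¬ p ∣ a
    have hcop : Nat.Coprime a n := by
      rw [hn]
      exact (Nat.Coprime.pow_right μ ((Nat.Prime.coprime_iff_not_dvd hp).mpr hpa).symm)
    have hA : IsUnit ((a : ℕ) : ZMod n) := (ZMod.isUnit_iff_coprime a n).mpr hcop
    set Ai : ZMod n := ((a : ℕ) : ZMod n)⁻¹ with hAi
    have hAiu : IsUnit Ai := IsUnit.of_mul_eq_one (a := Ai) _ (ZMod.inv_mul_of_unit _ hA)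
    set m : ℕ := Ai.val with hmdef
    have hmcast : ((m : ℕ) : ZMod n) = Ai := by
      simp [hmdef, ZMod.natCast_val, ZMod.cast_id]
    have hm : Nat.Coprime m n := by
      rw [← ZMod.isUnit_iff_coprime, hmcast]; exact hAiu
    have hmaZ : ((m : ℕ) : ZMod n) * ((a : ℕ) : ZMod n) = 1 := by
      rw [hmcast]; exact ZMod.inv_mul_of_unit _ hA
    refine ⟨m, hm, ?_⟩
    apply finish5 n a b c m hn0 hm hsum hna hnb hnc
    have hn4 : 4 < n := by
      rw [hn]
      calc 4 < 5 := by omega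
        _ ≤ p := hp5
        _ = p ^ 1 := (pow_one p).symm
        _ ≤ p ^ μ := Nat.pow_le_pow_right (by omega) (by omega)
    haveI : Fact (1 < n) := ⟨hn1⟩
    have hma1 : (m * a) % n = 1 := by
      have : ((m * a : ℕ) : ZMod n) = 1 := by push_cast; exact hmaZ
      have h2 := ZMod.val_natCast (n := n) (m * a)
      rw [this, ZMod.val_one] at h2
      omega
    set w : ℕ := (m * b) % n with hw
    have hwlt : w < n := Nat.mod_lt _ hn0
    have hwZ : ((w : ℕ) : ZMod n) = ((m : ℕ) : ZMod n) * b := by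
      rw [hw]; push_cast [ZMod.natCast_mod]; ring
    have hkey : ∀ j : ℕ, 1 ≤ j → j ≤ 3 → w = n - j → n ∣ (j * a + b) := by
      intro j hj1 hj3 hwj
      apply (ZMod.natCast_eq_zero_iff _ _).mp
      have hmne : ¬ n ∣ (m * (j * a + b)) → True := fun _ => trivial
      have hcast : ((m : ℕ) : ZMod n) * ((j * a + b : ℕ) : ZMod n) = 0 := by
        push_cast
        have : ((m:ℕ) : ZMod n) * ((j:ℕ) * a + b) =
            (j : ZMod n) * (((m:ℕ):ZMod n) * a) + ((m:ℕ):ZMod n) * b := by ring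
        rw [this, hmaZ, ← hwZ, hwj]
        have : ((j : ℕ) : ZMod n) * 1 + ((n - j : ℕ) : ZMod n) = ((j + (n - j) : ℕ) : ZMod n) := by
          push_cast; ring
        rw [this, show j + (n - j) = n by omega, ZMod.natCast_self]
        
      -- m is a unit, so (j*a+b : ZMod n) = 0
      have := hA  -- unused
      have hmu : IsUnit ((m : ℕ) : ZMod n) := by rw [hmcast]; exact hAiu
      exact (IsUnit.mul_right_eq_zero hmu).mp hcast
    have hw1 : w ≠ n - 1 := by
      intro h
      exact hab (by have := hkey 1 le_rfl (by omega) h; simpa [one_mul] using this)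
    have hw2 : w ≠ n - 2 := by
      intro h
      have := hkey 2 (by omega) (by omega) h
      exact h2ab (by rw [show a + a + b = 2 * a + b by ring]; exact this)
    have hw3 : w ≠ n - 3 := by
      intro h
      have := hkey 3 (by omega) (by omega) h
      exact h3ab (by rw [show a + a + a + b = 3 * a + b by ring]; exact this)
    rw [hma1]
    omega

lemma sum_five {M : Type*} [AddCommMonoid M] (f : Fin 5 → M) (i j k l1 l2 : Fin 5)
    (hij : i ≠ j) (hik : i ≠ k) (hjk : j ≠ k) (hl : l1 ≠ l2)
    (hC : ({i, j, k} : Finset (Fin 5))ᶜ = {l1, l2}) :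
    ∑ t, f t = f i + f j + f k + (f l1 + f l2) := by
  rw [← Finset.sum_add_sum_compl {i, j, k} f, hC]
  rw [Finset.sum_insert (by simp [hij, hik]), Finset.sum_insert (by simp [hjk]),
    Finset.sum_singleton, Finset.sum_pair hl]
  abel

theorem stmt_2 (p μ n : ℕ) (hp : p.Prime) (hp5 : 5 ≤ p) (hμ : 2 ≤ μ)
    (hn : n = p ^ μ) (x : Fin 5 → ℕ)
    (hx : ∀ i, 1 ≤ x i ∧ x i ≤ n - 1)
    (hzs : n ∣ ∑ i, x i)
    (hmin : ∀ s : Finset (Fin 5), s.Nonempty → s ≠ Finset.univ →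
      ¬ n ∣ ∑ i ∈ s, x i)
    (hgcd : Nat.gcd n (Nat.gcd (x 0) (Nat.gcd (x 1) (Nat.gcd (x 2)
      (Nat.gcd (x 3) (x 4))))) = 1)
    (h3eq : ∃ i j k : Fin 5, i ≠ j ∧ i ≠ k ∧ j ≠ k ∧ x i = x j ∧ x i = x k) :
    ∃ m : ℕ, Nat.gcd m n = 1 ∧ (∑ i, lpr n (m * x i)) = n := by
  obtain ⟨i, j, k, hij, hik, hjk, hx1, hx2⟩ := h3eq
  have hcard : ({i, j, k} : Finset (Fin 5)).card = 3 := by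
    rw [Finset.card_insert_of_notMem (by simp [hij, hik]),
      Finset.card_insert_of_notMem (by simp [hjk]), Finset.card_singleton]
  have hccard : (({i, j, k} : Finset (Fin 5))ᶜ).card = 2 := by
    rw [Finset.card_compl, hcard]
    rfl
  obtain ⟨l1, l2, hl, hC⟩ := Finset.card_eq_two.mp hccard
  have hl1 : l1 ∉ ({i, j, k} : Finset (Fin 5)) := by
    have : l1 ∈ ({i, j, k} : Finset (Fin 5))ᶜ := by rw [hC]; simp
    simpa [Finset.mem_compl] using this
  have hl2 : l2 ∉ ({i, j, k} : Finset (Fin 5)) := by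
    have : l2 ∈ ({i, j, k} : Finset (Fin 5))ᶜ := by rw [hC]; simp
    simpa [Finset.mem_compl] using this
  simp only [Finset.mem_insert, Finset.mem_singleton, not_or] at hl1 hl2
  obtain ⟨h1i, h1j, h1k⟩ := hl1
  obtain ⟨h2i, h2j, h2k⟩ := hl2
  have hm5 : ∀ t : Fin 5, t = i ∨ t = j ∨ t = k ∨ t = l1 ∨ t = l2 := by
    intro t
    by_cases h : t ∈ ({i, j, k} : Finset (Fin 5))
    · simp only [Finset.mem_insert, Finset.mem_singleton] at h
      tauto
    · have : t ∈ ({l1, l2} : Finset (Fin 5)) := hC ▸ Finset.mem_compl.mpr h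
      simp only [Finset.mem_insert, Finset.mem_singleton] at this
      tauto
  have h21 : l2 ≠ l1 := Ne.symm hl
  have hneu1 : ∀ s : Finset (Fin 5), l2 ∉ s → s ≠ Finset.univ :=
    fun s h hs => h (hs ▸ Finset.mem_univ l2)
  have hneu2 : ∀ s : Finset (Fin 5), l1 ∉ s → s ≠ Finset.univ :=
    fun s h hs => h (hs ▸ Finset.mem_univ l1)
  have hna : ¬ n ∣ x i := by
    have := hmin {i} (Finset.singleton_nonempty i) (hneu1 _ (by simp [h2i]))
    simpa using this
  have hnb : ¬ n ∣ x l1 := by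
    have := hmin {l1} (Finset.singleton_nonempty l1) (hneu1 _ (by simp [h21]))
    simpa using this
  have hnc : ¬ n ∣ x l2 := by
    have := hmin {l2} (Finset.singleton_nonempty l2) (hneu2 _ (by simp [hl]))
    simpa using this
  have hab : ¬ n ∣ (x i + x l1) := by
    have := hmin {i, l1} (Finset.insert_nonempty _ _) (hneu1 _ (by simp [h2i, h21]))
    rwa [Finset.sum_pair (Ne.symm h1i)] at this
  have h2ab : ¬ n ∣ (x i + x i + x l1) := by
    have := hmin {i, j, l1} (Finset.insert_nonempty _ _)
      (hneu1 _ (by simp [h2i, h2j, h21]))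
    rw [Finset.sum_insert (by simp [hij, Ne.symm h1i]),
      Finset.sum_insert (by simp [Ne.symm h1j]), Finset.sum_singleton] at this
    intro hd
    apply this
    have : x i + (x j + x l1) = x i + x i + x l1 := by rw [← hx1]; ring
    rwa [this]
  have h3ab : ¬ n ∣ (x i + x i + x i + x l1) := by
    have := hmin {i, j, k, l1} (Finset.insert_nonempty _ _)
      (hneu1 _ (by simp [h2i, h2j, h2k, h21]))
    rw [Finset.sum_insert (by simp [hij, hik, Ne.symm h1i]),
      Finset.sum_insert (by simp [hjk, Ne.symm h1j]),
      Finset.sum_insert (by simp [Ne.symm h1k]), Finset.sum_singleton] at this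
    intro hd
    apply this
    have : x i + (x j + (x k + x l1)) = x i + x i + x i + x l1 := by
      rw [← hx1, ← hx2]; ring
    rwa [this]
  have hsumtot : n ∣ (x i + x i + x i + x l1 + x l2) := by
    have := sum_five x i j k l1 l2 hij hik hjk hl hC
    rw [this] at hzs
    have heq : x i + x j + x k + (x l1 + x l2) = x i + x i + x i + x l1 + x l2 := by
      rw [← hx1, ← hx2]; ring
    rwa [heq] at hzs
  have hgcd' : ¬ (p ∣ x i ∧ p ∣ x l1 ∧ p ∣ x l2) := by
    rintro ⟨hpa, hpb, hpc⟩
    have hall : ∀ t : Fin 5, p ∣ x t := by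
      intro t
      rcases hm5 t with h | h | h | h | h <;> subst h
      · exact hpa
      · rw [← hx1]; exact hpa
      · rw [← hx2]; exact hpa
      · exact hpb
      · exact hpc
    have hpn : p ∣ n := by rw [hn]; exact dvd_pow_self p (by omega)
    have : p ∣ 1 := by
      rw [← hgcd]
      exact Nat.dvd_gcd hpn (Nat.dvd_gcd (hall 0) (Nat.dvd_gcd (hall 1)
        (Nat.dvd_gcd (hall 2) (Nat.dvd_gcd (hall 3) (hall 4)))))
    exact hp.one_lt.ne' (Nat.dvd_one.mp this)
  obtain ⟨m, hm, hfin⟩ := core p μ n hp hp5 hμ hn (x i) (x l1) (x l2)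
    hna hnb hnc hab h2ab h3ab hsumtot hgcd'
  refine ⟨m, hm, ?_⟩
  rw [sum_five (fun t => lpr n (m * x t)) i j k l1 l2 hij hik hjk hl hC]
  show lpr n (m * x i) + lpr n (m * x j) + lpr n (m * x k) +
    (lpr n (m * x l1) + lpr n (m * x l2)) = n
  rw [← hx1, ← hx2]
  exact hfin
end

section
/- Let n be an odd integer and let a, b, c be integers with 4 ≤ a ≤ b < c < n/2 and c = a + b − 2, so that 1 + 1 + c + (n−b) + (n−a) = 2n. Suppose there exist integers M and k with gcd(n, M) = 1, kn/c < M < kn/b, and M·a < n. Then |M·1|_n + |M·1|_n + |M·c|_n + |M·(n−b)|_n + |M·(n−a)|_n = n. -/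
private lemma key_mod (n m x : ℕ) (hmn : m % n = 0) (h1 : m ≤ x) (h2 : x < m + n) :
    x % n = x - m := by
  have hx : x % n = (x - m) % n := by
    conv_lhs => rw [show x = (x - m) + m from by omega]
    rw [Nat.add_mod, hmn, Nat.add_zero, Nat.mod_mod]
  rw [hx, Nat.mod_eq_of_lt (by omega)]

theorem stmt_3 (n a b c : ℕ) (hodd : Odd n) (ha : 4 ≤ a) (hab : a ≤ b)
    (hbc : b < c) (hc : 2 * c < n) (hcab : c = a + b - 2)
    (M k : ℕ) (hM : Nat.gcd n M = 1) (hk1 : k * n < M * c) (hk2 : M * b < k * n)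
    (hMa : M * a < n) :
    lpr n (M * 1) + lpr n (M * 1) + lpr n (M * c) + lpr n (M * (n - b)) +
      lpr n (M * (n - a)) = n := by
  have hn : 11 ≤ n := by omega
  have hM0 : 0 < M := by
    rcases Nat.eq_zero_or_pos M with h | h
    · subst h; simp [Nat.gcd_zero_right] at hM; omega
    · exact h
  have ha0 : 0 < a := by omega
  -- basic product facts
  have e1 : M * c + 2 * M = M * a + M * b := by
    have hc2 : c + 2 = a + b := by omega
    rw [show M * c + 2 * M = M * (c + 2) by ring, hc2, Nat.mul_add]
  have hMa0 : 0 < M * a := Nat.mul_pos hM0 ha0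
  have hMltn : M < n := by
    calc M = M * 1 := (mul_one M).symm
    _ ≤ M * a := Nat.mul_le_mul_left M ha0
    _ < n := hMa
  have hkM : k < M := by
    have h1 : M * c < M * n := (Nat.mul_lt_mul_left hM0).mpr (by omega)
    have h2 : k * n < M * n := lt_trans hk1 h1
    exact lt_of_mul_lt_mul_right h2 (Nat.zero_le n)
  -- equations avoiding subtraction
  have eb : M * (n - b) + M * b = M * n := by
    rw [← Nat.mul_add]; congr 1; omega
  have ea : M * (n - a) + M * a = M * n := by
    rw [← Nat.mul_add]; congr 1; omega
  have ek : (M - k) * n + k * n = M * n := by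
    rw [← Nat.add_mul]; congr 1; omega
  have e1' : (M - 1) * n + n = M * n := by
    rw [show (M - 1) * n + n = (M - 1 + 1) * n by ring]; congr 1; omega
  -- mod computations
  have m1 : M % n = M := Nat.mod_eq_of_lt hMltn
  have mc : M * c % n = M * c - k * n :=
    key_mod n (k * n) (M * c) (Nat.mul_mod_left k n) (le_of_lt hk1) (by linarith)
  have hb1 : (M - k) * n < M * (n - b) := by linarith
  have mb : M * (n - b) % n = M * (n - b) - (M - k) * n :=
    key_mod n ((M - k) * n) (M * (n - b)) (Nat.mul_mod_left _ n) (le_of_lt hb1)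
      (by linarith)
  have ha1 : (M - 1) * n < M * (n - a) := by linarith
  have ma : M * (n - a) % n = M * (n - a) - (M - 1) * n :=
    key_mod n ((M - 1) * n) (M * (n - a)) (Nat.mul_mod_left _ n) (le_of_lt ha1)
      (by linarith)
  -- resolve lpr
  have l1 : lpr n (M * 1) = M := by
    simp only [lpr, mul_one, m1]
    rw [if_neg (by omega)]
  have lc : lpr n (M * c) = M * c - k * n := by
    simp only [lpr, mc]
    rw [if_neg (Nat.sub_ne_zero_of_lt hk1)]
  have lb : lpr n (M * (n - b)) = M * (n - b) - (M - k) * n := by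
    simp only [lpr, mb]
    rw [if_neg (Nat.sub_ne_zero_of_lt hb1)]
  have la : lpr n (M * (n - a)) = M * (n - a) - (M - 1) * n := by
    simp only [lpr, ma]
    rw [if_neg (Nat.sub_ne_zero_of_lt ha1)]
  rw [l1, lc, lb, la]
  zify [le_of_lt hk1, le_of_lt hb1, le_of_lt ha1]
  zify at e1 eb ea ek e1'
  linarith
end

section
/- Let n = p^μ be a prime power with p ≥ 7, μ ≥ 2, and n ≥ 289. Let a, b, c be integers with 3 ≤ a ≤ b < c < n/2 and c = a + b − 2. Let s = ⌊b/a⌋. If s(a−2)n/(bc) > 2, then there exists an integer M with gcd(M, n) = 1, sn/c < M < sn/b, and M·a < n; consequently |M|_n + |M|_n + |M·c|_n + |M·(n−b)|_n + |M·(n−a)|_n = n. -/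
lemma lpr_between (n v x : ℕ) (hv : n ∣ v) (h1 : v < x) (h2 : x < v + n) :
    lpr n x = x - v := by
  obtain ⟨k, rfl⟩ := hv
  have hmod : x % n = x - n * k := by
    conv_lhs => rw [← Nat.sub_add_cancel h1.le]
    rw [Nat.add_mul_mod_self_left]
    exact Nat.mod_eq_of_lt ((tsub_lt_iff_left h1.le).mpr h2)
  unfold lpr
  rw [hmod, if_neg (Nat.sub_ne_zero_of_lt h1)]

theorem stmt_4 (p μ n a b c : ℕ) (hp : p.Prime) (hp7 : 7 ≤ p) (hμ : 2 ≤ μ)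
    (hn : n = p ^ μ) (hn289 : 289 ≤ n)
    (ha : 3 ≤ a) (hab : a ≤ b) (hbc : b < c) (hc : 2 * c < n)
    (hcab : c = a + b - 2)
    (hyp : 2 * (b * c) < (b / a) * (a - 2) * n) :
    ∃ M : ℕ, Nat.gcd M n = 1 ∧ (b / a) * n < M * c ∧ M * b < (b / a) * n ∧
      M * a < n ∧
      lpr n M + lpr n M + lpr n (M * c) + lpr n (M * (n - b)) +
        lpr n (M * (n - a)) = n := by
  set s := b / a with hs
  have hn0 : 0 < n := by omega
  have ha0 : 0 < a := by omega
  have hc0 : 0 < c := by omega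
  have hb0 : 0 < b := by omega
  have hcn : c < n := by omega
  have hbn : b < n := by omega
  have han : a < n := by omega
  have hs1 : 1 ≤ s := (Nat.one_le_div_iff ha0).mpr hab
  have hsa : s * a ≤ b := by
    rw [hs]; exact Nat.div_mul_le_self b a
  set L := s * n with hL
  have hL0 : 0 < L := by positivity
  -- d = c - b = a - 2
  set d := a - 2 with hd
  have hcbd : c = b + d := by omega
  have hda : d ≤ a := by omega
  set m := L / c + 1 with hm
  -- L < m * c
  have h1 : L < m * c := by
    have e : m * c = L / c * c + c := by rw [hm]; ring
    have h3 := Nat.div_mul_le_self L c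
    have h4 := Nat.lt_div_mul_add hc0 (a := L)
    omega
  -- (m+1) * b < L
  have h2 : (m + 1) * b < L := by
    have key : c * ((m + 1) * b) < c * L := by
      have e : c * ((m + 1) * b) = (L / c * c) * b + 2 * (b * c) := by rw [hm]; ring
      have h3 : L / c * c ≤ L := Nat.div_mul_le_self L c
      have h5 : 2 * (b * c) < d * L := by
        calc 2 * (b * c) < s * d * n := hyp
          _ = d * L := by rw [hL]; ring
      calc c * ((m + 1) * b) = (L / c * c) * b + 2 * (b * c) := e
        _ ≤ L * b + 2 * (b * c) := by
            exact Nat.add_le_add_right (Nat.mul_le_mul_right b h3) _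
        _ < L * b + d * L := Nat.add_lt_add_left h5 _
        _ = c * L := by rw [hcbd]; ring
    exact Nat.lt_of_mul_lt_mul_left key
  have hmb : m * b < L := lt_of_le_of_lt (Nat.mul_le_mul (Nat.le_succ m) le_rfl) h2
  -- choose M
  obtain ⟨M, hndvd, hMc, hMb⟩ : ∃ M, ¬ p ∣ M ∧ L < M * c ∧ M * b < L := by
    by_cases h : p ∣ m
    · refine ⟨m + 1, ?_, lt_of_lt_of_le h1 (Nat.mul_le_mul (Nat.le_succ m) le_rfl), h2⟩
      intro h2'
      have hdv : p ∣ 1 := by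
        have := Nat.dvd_sub h2' h
        simpa using this
      have := Nat.le_of_dvd one_pos hdv
      omega
    · exact ⟨m, h, h1, hmb⟩
  have hcop : Nat.gcd M n = 1 := by
    rw [hn]
    have hpM : Nat.Coprime M p := (Nat.coprime_comm.mp (hp.coprime_iff_not_dvd.mpr hndvd))
    exact hpM.pow_right μ
  have hMa : M * a < n := by
    have h3 : M * (s * a) ≤ M * b := Nat.mul_le_mul_left M hsa
    have h4 : s * (M * a) < s * n := by
      calc s * (M * a) = M * (s * a) := by ring
        _ ≤ M * b := h3
        _ < s * n := hMb
    exact Nat.lt_of_mul_lt_mul_left h4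
  have hM0 : 0 < M := by
    rcases Nat.eq_zero_or_pos M with h | h
    · rw [h] at hMc; omega
    · exact h
  have hMn : M < n := by
    have h3 : M * 3 ≤ M * a := Nat.mul_le_mul_left M ha
    nlinarith
  have hsM : s < M := by
    have h3 : M * c ≤ M * n := Nat.mul_le_mul_left M hcn.le
    have : s * n < M * n := lt_of_lt_of_le hMc h3
    exact Nat.lt_of_mul_lt_mul_right this
  clear_value s L d m
  subst hL hd
  clear hm h1 h2 hmb m
  -- upper bound for M*c, lower bound for M*b
  have hsplit : M * c = M * b + M * (a - 2) := by rw [hcbd, Nat.mul_add]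
  have hMd : M * (a - 2) ≤ M * a := Nat.mul_le_mul_left M hda
  have hMc_ub : M * c < s * n + n := by
    calc M * c = M * b + M * (a - 2) := hsplit
      _ ≤ M * b + M * a := Nat.add_le_add_left hMd _
      _ < s * n + n := by exact Nat.add_lt_add hMb hMa
  have hMb_lb : s * n < M * b + n := by
    have : s * n < M * b + M * (a - 2) := hsplit ▸ hMc
    exact lt_of_lt_of_le this (Nat.add_le_add_left (le_of_lt (lt_of_le_of_lt hMd hMa)) _)
  -- lpr computations
  have e1 : lpr n M = M := by
    have := lpr_between n 0 M (dvd_zero n) hM0 (by omega)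
    simpa using this
  have e2 : lpr n (M * c) = M * c - s * n := by
    exact lpr_between n (s * n) (M * c) (Dvd.intro_left s rfl) hMc hMc_ub
  have e3 : lpr n (M * (n - b)) = s * n - M * b := by
    have hv : n ∣ (M - s) * n := Dvd.intro_left _ rfl
    have hlow : (M - s) * n < M * (n - b) := by
      have hMbZ : (M : ℤ) * b < (s : ℤ) * n := by exact_mod_cast hMb
      zify [hsM.le, hbn.le]
      linarith [hMbZ]
    have hhigh : M * (n - b) < (M - s) * n + n := by
      have hZ : (s : ℤ) * n < (M : ℤ) * b + n := by exact_mod_cast hMb_lb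
      zify [hsM.le, hbn.le]
      linarith [hZ]
    rw [lpr_between n ((M - s) * n) (M * (n - b)) hv hlow hhigh]
    zify [hsM.le, hbn.le, hlow.le, hMb.le]
    ring
  have e4 : lpr n (M * (n - a)) = n - M * a := by
    have hv : n ∣ (M - 1) * n := Dvd.intro_left _ rfl
    have hlow : (M - 1) * n < M * (n - a) := by
      have hZ : (M : ℤ) * a < n := by exact_mod_cast hMa
      zify [hM0, han.le]
      linarith [hZ]
    have hhigh : M * (n - a) < (M - 1) * n + n := by
      have hZ : (0 : ℤ) < (M : ℤ) * a := by exact_mod_cast Nat.mul_pos hM0 ha0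
      zify [hM0, han.le]
      linarith [hZ]
    rw [lpr_between n ((M - 1) * n) (M * (n - a)) hv hlow hhigh]
    zify [hM0, han.le, hlow.le, hMa.le]
    ring
  refine ⟨M, hcop, hMc, hMb, hMa, ?_⟩
  rw [e1, e2, e3, e4]
  have hMcab : M * c + 2 * M = M * a + M * b := by
    have hce : c + 2 = a + b := by omega
    calc M * c + 2 * M = M * (c + 2) := by ring
      _ = M * (a + b) := by rw [hce]
      _ = M * a + M * b := by ring
  zify [hMc.le, hMb.le, hMa.le]
  linarith [hMcab]
end

section
/- Let n = p^μ be a prime power with p ≥ 7, μ ≥ 2, and n ≥ 289. Let a, b, c be integers with 3 ≤ a ≤ b < c < n/2 and c = a + b − 2, and let s = ⌊b/a⌋. If (s−1)(a−2)n/(bc) > 1 and n/c < p − 2, then there exists an integer M coprime to n with M·a < n and kn/c < M < kn/b for k = s−1 or k = s; consequently the sequence (1, 1, c, n−b, n−a) over Z/n has index 1. -/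
private lemma lpr_eq_s5 {n x r q : ℕ} (hx : x = q * n + r) (h0 : 0 < r) (hr : r < n) :
    lpr n x = r := by
  have hm : x % n = r := by
    subst hx
    rw [add_comm, Nat.add_mul_mod_self_right]
    exact Nat.mod_eq_of_lt hr
  unfold lpr
  rw [hm, if_neg (by omega)]

private lemma lt_div_succ_mul (X : ℕ) {c : ℕ} (hc : 0 < c) : X < (X / c + 1) * c := by
  have h := Nat.div_add_mod X c
  have h2 := Nat.mod_lt X hc
  calc X = c * (X / c) + X % c := h.symm
    _ < c * (X / c) + c := Nat.add_lt_add_left h2 _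
    _ = (X / c + 1) * c := by ring

private lemma div_one_mul_lt {X b c : ℕ} (hc : 0 < c) (h : X * b + b * c < X * c) :
    (X / c + 1) * b < X := by
  have h1 : X / c * c ≤ X := Nat.div_mul_le_self X c
  have h2 : (X / c + 1) * b * c < X * c := by
    calc (X / c + 1) * b * c = (X / c * c) * b + b * c := by ring
      _ ≤ X * b + b * c := Nat.add_le_add_right (mul_le_mul_left h1 b) _
      _ < X * c := h
  exact lt_of_mul_lt_mul_right h2 (Nat.zero_le c)

private lemma sub_lt_of_lt_add {x y z : ℕ} (h : x < y + z) (hz : 0 < z) : x - y < z := by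
  omega

private lemma sub_split {X m y : ℕ} (h1 : y ≤ m) (h2 : m ≤ X) :
    X - y = (X - m) + (m - y) := by omega

private lemma fin_sum {M A B C K n : ℕ} (h1 : K < C) (h2 : B < K) (h3 : C < K + n)
    (h4 : A < n) (h5 : A + B = M + M + C) :
    M + M + (C - K) + (K - B) + (n - A) = n := by omega

private lemma cop_of_not_dvd {p μ n M : ℕ} (hp : p.Prime) (hn : n = p ^ μ)
    (h : ¬ p ∣ M) : Nat.gcd M n = 1 := by
  subst hn
  exact Nat.Coprime.pow_right μ ((Nat.Prime.coprime_iff_not_dvd hp).mpr h).symm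

private lemma sum_lpr {n a b c d M k : ℕ} (ha : a = d + 2) (hc : c = b + d)
    (hb : 0 < b) (hcn : c < n)
    (h1 : k * n < M * c) (h2 : M * b < k * n) (hMa : M * a < n) :
    lpr n M + lpr n M + lpr n (M * c) + lpr n (M * (n - b)) +
      lpr n (M * (n - a)) = n := by
  have hM : 0 < M := Nat.pos_of_ne_zero fun h => by
    subst h; rw [zero_mul] at h1; exact Nat.not_lt_zero _ h1
  have hk : 0 < k := Nat.pos_of_ne_zero fun h => by
    subst h; rw [zero_mul] at h2; exact Nat.not_lt_zero _ h2
  have hMn : M < n := by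
    have h3 : M = M * 1 := (mul_one M).symm
    have h4 : M * 1 ≤ M * a := mul_le_mul_right (by omega) M
    omega
  have hn0 : 0 < n := lt_of_le_of_lt (Nat.zero_le M) hMn
  have hMd : M * d < n := by
    have hle : M * d ≤ M * a := mul_le_mul_right (by omega : d ≤ a) M
    exact lt_of_le_of_lt hle hMa
  have hMc : M * c = M * b + M * d := by rw [hc]; ring
  have hkM : k < M := by
    have h3 : M * c ≤ M * n := mul_le_mul_right hcn.le M
    have h4 : k * n < M * n := lt_of_lt_of_le h1 h3
    exact lt_of_mul_lt_mul_right h4 (Nat.zero_le n)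
  have hCu : M * c < k * n + n := by
    have h5 : M * b + M * d < k * n + n := Nat.add_lt_add h2 hMd
    rw [hMc]; exact h5
  have hBl : k * n < M * b + n := by
    calc k * n < M * c := h1
      _ = M * b + M * d := hMc
      _ ≤ M * b + n := Nat.add_le_add_left hMd.le _
  have l0 : lpr n M = M :=
    lpr_eq_s5 (q := 0) (by rw [zero_mul, zero_add]) hM hMn
  have l1 : lpr n (M * c) = M * c - k * n :=
    lpr_eq_s5 (q := k) (Nat.add_sub_cancel' h1.le).symm (Nat.sub_pos_of_lt h1)
      (sub_lt_of_lt_add hCu hn0)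
  have l2 : lpr n (M * (n - b)) = k * n - M * b := by
    have exb : M * (n - b) = (M - k) * n + (k * n - M * b) := by
      rw [Nat.mul_sub, Nat.sub_mul]
      exact sub_split h2.le (mul_le_mul_left hkM.le n)
    exact lpr_eq_s5 exb (Nat.sub_pos_of_lt h2) (sub_lt_of_lt_add hBl hn0)
  have l3 : lpr n (M * (n - a)) = n - M * a := by
    have hnM : n ≤ M * n := by
      calc n = 1 * n := (one_mul n).symm
        _ ≤ M * n := mul_le_mul_left hM n
    have exa : M * (n - a) = (M - 1) * n + (n - M * a) := by
      rw [Nat.mul_sub, Nat.sub_mul, one_mul]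
      exact sub_split hMa.le hnM
    exact lpr_eq_s5 exa (Nat.sub_pos_of_lt hMa)
      (Nat.sub_lt hn0 (Nat.mul_pos hM (by omega : 0 < a)))
  rw [l0, l1, l2, l3]
  have hsum : M * a + M * b = M + M + M * c := by rw [ha, hc]; ring
  exact fin_sum h1 h2 hCu hMa hsum

theorem stmt_5 (p μ n a b c : ℕ) (hp : p.Prime) (hp7 : 7 ≤ p) (hμ : 2 ≤ μ)
    (hn : n = p ^ μ) (hn289 : 289 ≤ n)
    (ha : 3 ≤ a) (hab : a ≤ b) (hbc : b < c) (hc : 2 * c < n)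
    (hcab : c = a + b - 2)
    (hyp1 : b * c < (b / a - 1) * (a - 2) * n) (hyp2 : n < (p - 2) * c) :
    ∃ M : ℕ, Nat.gcd M n = 1 ∧ M * a < n ∧
      (∃ k : ℕ, (k = b / a - 1 ∨ k = b / a) ∧ k * n < M * c ∧ M * b < k * n) ∧
      lpr n M + lpr n M + lpr n (M * c) + lpr n (M * (n - b)) +
        lpr n (M * (n - a)) = n := by
  set s := b / a with hs
  obtain ⟨d, hd⟩ : ∃ d, a = d + 2 := ⟨a - 2, by omega⟩
  have hcb : c = b + d := by omega
  have hd1 : 1 ≤ d := by omega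
  have hcpos : 0 < c := by omega
  have hnpos : 0 < n := by omega
  have hyp1' : b * c < (s - 1) * d * n := by
    have h2 : a - 2 = d := by omega
    have h3 := hyp1
    rwa [h2] at h3
  have hs2 : 2 ≤ s := by
    by_contra h
    have h0 : s - 1 = 0 := by omega
    have h3 := hyp1'
    rw [h0, zero_mul, zero_mul] at h3
    exact absurd h3 (Nat.not_lt_zero _)
  have hsab : s * a ≤ b := by
    rw [hs]; exact Nat.div_mul_le_self b a
  have key : ∀ k : ℕ, b * c < k * d * n →
      k * n < (k * n / c + 1) * c ∧ (k * n / c + 1) * b < k * n := by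
    intro k hk
    refine ⟨lt_div_succ_mul _ hcpos, ?_⟩
    apply div_one_mul_lt hcpos
    have e : k * n * c = k * n * b + k * d * n := by rw [hcb]; ring
    calc k * n * b + b * c < k * n * b + k * d * n := Nat.add_lt_add_left hk _
      _ = k * n * c := e.symm
  have hk1 := key (s - 1) hyp1'
  have hk2 := key s (lt_of_lt_of_le hyp1'
    (mul_le_mul_left (mul_le_mul_left (Nat.sub_le s 1) d) n))
  -- facts about the division quotients
  have esn : s * n = (s - 1) * n + n := by
    have h0 : s - 1 + 1 = s := by omega
    calc s * n = (s - 1 + 1) * n := by rw [h0]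
      _ = (s - 1) * n + n := by ring
  have hdiv_lo : (s - 1) * n / c + n / c ≤ s * n / c := by
    rw [Nat.le_div_iff_mul_le hcpos, esn]
    calc ((s - 1) * n / c + n / c) * c = (s - 1) * n / c * c + n / c * c := by ring
      _ ≤ (s - 1) * n + n := Nat.add_le_add (Nat.div_mul_le_self _ _) (Nat.div_mul_le_self _ _)
  have hdiv_hi : s * n / c ≤ (s - 1) * n / c + n / c + 1 := by
    have h1 : (s - 1) * n < ((s - 1) * n / c + 1) * c := lt_div_succ_mul _ hcpos
    have h2 : n < (n / c + 1) * c := lt_div_succ_mul _ hcpos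
    have h3 : (s - 1) * n + n < ((s - 1) * n / c + n / c + 2) * c := by
      calc (s - 1) * n + n < ((s - 1) * n / c + 1) * c + (n / c + 1) * c :=
            Nat.add_lt_add h1 h2
        _ = ((s - 1) * n / c + n / c + 2) * c := by ring
    have h4 : s * n / c < (s - 1) * n / c + n / c + 2 := by
      rw [esn]
      exact (Nat.div_lt_iff_lt_mul hcpos).mpr h3
    have step : ∀ x y : ℕ, x < y + 2 → x ≤ y + 1 := by intro x y h; omega
    exact step _ _ h4
  have hnc2 : 2 ≤ n / c := (Nat.le_div_iff_mul_le hcpos).mpr (by omega)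
  have hncp : n / c < p - 2 := (Nat.div_lt_iff_lt_mul hcpos).mpr hyp2
  have pack : ∀ q0 q1 q2 : ℕ, q1 + q0 ≤ q2 → q2 ≤ q1 + q0 + 1 → 2 ≤ q0 → q0 < p - 2 →
      q1 + 1 < q2 + 1 ∧ (q2 + 1) - (q1 + 1) < p := by
    intro q0 q1 q2 e1 e2 e3 e4
    omega
  have hM12 := pack (n / c) ((s - 1) * n / c) (s * n / c) hdiv_lo hdiv_hi hnc2 hncp
  have notdvd : ∀ x y : ℕ, x < y → y - x < p → p ∣ x → ¬ p ∣ y := by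
    intro x y e1 e2 hx hy
    have h3 := Nat.dvd_sub hy hx
    have h4 := Nat.le_of_dvd (by omega) h3
    omega
  have hMa : ∀ M k : ℕ, k ≤ s → M * b < k * n → M * a < n := by
    intro M k hks hMb
    have ha0 : 0 < a := by omega
    have h : M * a * b < n * b := by
      calc M * a * b = M * b * a := by ring
        _ < k * n * a := mul_lt_mul_of_pos_right hMb ha0
        _ ≤ s * n * a := mul_le_mul_left (mul_le_mul_left hks n) a
        _ = s * a * n := by ring
        _ ≤ b * n := mul_le_mul_left hsab n
        _ = n * b := by ring
    exact lt_of_mul_lt_mul_right h (Nat.zero_le b)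
  by_cases hdvd : p ∣ (s - 1) * n / c + 1
  · -- use M = s*n/c + 1 with k = s
    have hnd : ¬ p ∣ s * n / c + 1 := notdvd _ _ hM12.1 hM12.2 hdvd
    exact ⟨s * n / c + 1, cop_of_not_dvd hp hn hnd, hMa _ s le_rfl hk2.2,
      ⟨s, Or.inr rfl, hk2.1, hk2.2⟩,
      sum_lpr hd hcb (by omega) (by omega) hk2.1 hk2.2 (hMa _ s le_rfl hk2.2)⟩
  · exact ⟨(s - 1) * n / c + 1, cop_of_not_dvd hp hn hdvd,
      hMa _ (s - 1) (Nat.sub_le s 1) hk1.2,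
      ⟨s - 1, Or.inl rfl, hk1.1, hk1.2⟩,
      sum_lpr hd hcb (by omega) (by omega) hk1.1 hk1.2
        (hMa _ (s - 1) (Nat.sub_le s 1) hk1.2)⟩
end

section
/- Let n = p^μ be a prime power with p ≥ 7, μ ≥ 2, and n ≥ 289. Let a, b, c be integers with 6 ≤ a ≤ b < c < n/2, c = a + b − 2, and ⌊b/a⌋ ≥ 4, such that (1, 1, c, n−b, n−a) is a minimal zero-sum sequence over Z/n. Then there exists a unit m modulo n with |m|_n + |m|_n + |m·c|_n + |m·(n−b)|_n + |m·(n−a)|_n = n. -/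
/-- floor-division lower bound: `X < (X/D + 1) * D`. -/
lemma div_lb (X D : ℕ) (hD : 0 < D) : X + 1 ≤ (X / D + 1) * D := by
  have h1 := Nat.div_add_mod X D
  have h2 := Nat.mod_lt X hD
  have h3 : (X / D + 1) * D = D * (X / D) + D := by ring
  linarith

/-- floor-division upper bound: `(X/D + 1) * D ≤ X + D`. -/
lemma div_ub (X D : ℕ) : (X / D + 1) * D ≤ X + D := by
  have h1 := Nat.div_add_mod X D
  have h3 : (X / D + 1) * D = D * (X / D) + D := by ring
  have h4 : 0 ≤ X % D := Nat.zero_le _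
  linarith

lemma polyA (v u t : ℕ) :
    (v+6)*(2*(4*v+24+u)*(5*v+28+u) + (5*v+28+u) + (6*(5*v+28+u)+t)*(v+4))
      + (v+4)*((v+6)*(2*(5*v+28+u)) + (5*v+28+u))
    ≤ (v+4)*((5*v+28+u)*(6*(5*v+28+u)+t)) := by
  nlinarith [Nat.zero_le (v*v*v), Nat.zero_le (v*v*u), Nat.zero_le (v*u*u),
    Nat.zero_le (v*v*t), Nat.zero_le (v*u*t), Nat.zero_le (u*u*t), Nat.zero_le (v*u),
    Nat.zero_le (v*t), Nat.zero_le (u*t), Nat.zero_le (u*u), Nat.zero_le (v*v)]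

lemma polyB (v u t : ℕ) (h289 : 232 ≤ 10*v + 2*u + t) :
    (v+6)*((4*v+24+u)*(5*v+28+u) + (5*v+28+u) + 2*((2*(5*v+28+u)+1+t)*(v+4)))
      + (v+4)*((v+6)*(5*v+28+u) + (5*v+28+u))
    ≤ (v+4)*((5*v+28+u)*(2*(5*v+28+u)+1+t)) := by
  by_cases hP : 50 + 4*v ≤ v*v + u*v + 2*u
  · nlinarith [Nat.mul_le_mul_left (5*v+28+u) hP, Nat.zero_le ((1+t)*((v+4)*(3*v+16+u)))]
  · push_neg at hP
    have hv : v ≤ 10 := by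
      by_contra h
      push_neg at h
      have h2 : 11*v ≤ v*v := Nat.mul_le_mul_right v (by omega)
      linarith [Nat.zero_le (u*v), Nat.zero_le u]
    have hu : u ≤ 44 := by
      have h2 : u*2 ≤ u*(2+v) := Nat.mul_le_mul_left u (by omega)
      have h3 : u*(2+v) = u*v + 2*u := by ring
      linarith [Nat.zero_le (v*v)]
    interval_cases v <;> interval_cases u <;> omega

/-- From the window facts, derive the three core conditions. -/
lemma build (n a2 b j m s : ℕ) (ha2 : 4 ≤ a2)
    (hF3 : j * n + 1 ≤ (a2 + b) * m) (hF4 : (a2 + b) * m ≤ j * n + s)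
    (hwin : b * s + (a2 + b) + 1 ≤ a2 * (j * n))
    (hA : (a2 + 2) * (j * n) + (a2 + 2) * s + (a2 + b) ≤ (a2 + b) * n) :
    m * (a2 + 2) + 1 ≤ n ∧ m * b + 1 ≤ j * n ∧ j * n + 1 ≤ m * (a2 + b) := by
  have hCpos : 0 < a2 + b := by omega
  refine ⟨?_, ?_, ?_⟩
  · have e : (a2 + b) * (m * (a2 + 2) + 1) = (a2 + 2) * ((a2 + b) * m) + (a2 + b) := by ring
    have e2 : (a2 + 2) * ((a2 + b) * m) ≤ (a2 + 2) * (j * n) + (a2 + 2) * s := by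
      calc (a2 + 2) * ((a2 + b) * m) ≤ (a2 + 2) * (j * n + s) := Nat.mul_le_mul_left _ hF4
        _ = (a2 + 2) * (j * n) + (a2 + 2) * s := by ring
    have h1 : (a2 + b) * (m * (a2 + 2) + 1) ≤ (a2 + b) * n := by
      rw [e]; linarith
    exact Nat.le_of_mul_le_mul_left h1 hCpos
  · have e : (a2 + b) * (m * b + 1) = b * ((a2 + b) * m) + (a2 + b) := by ring
    have e2 : b * ((a2 + b) * m) ≤ b * (j * n) + b * s := by
      calc b * ((a2 + b) * m) ≤ b * (j * n + s) := Nat.mul_le_mul_left _ hF4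
        _ = b * (j * n) + b * s := by ring
    have e3 : (a2 + b) * (j * n) = b * (j * n) + a2 * (j * n) := by ring
    have h2 : (a2 + b) * (m * b + 1) < (a2 + b) * (j * n) := by
      rw [e]; linarith
    exact le_of_lt (Nat.lt_of_mul_lt_mul_left h2)
  · calc j * n + 1 ≤ (a2 + b) * m := hF3
      _ = m * (a2 + b) := by ring

/-- Core: the three conditions plus coprimality give the index-1 witness equality. -/
lemma core_s6 (p μ n a2 b m j : ℕ) (hp : p.Prime) (hn : n = p ^ μ)
    (hpm : ¬ p ∣ m) (ha2 : 4 ≤ a2) (hb : a2 + 2 ≤ b) (hcn : 2 * (a2 + b) < n)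
    (h1 : m * (a2 + 2) + 1 ≤ n) (h2 : m * b + 1 ≤ j * n) (h3 : j * n + 1 ≤ m * (a2 + b)) :
    Nat.gcd m n = 1 ∧
      lpr n m + lpr n m + lpr n (m * (a2 + b)) + lpr n (m * (n - b)) +
        lpr n (m * (n - (a2 + 2))) = n := by
  have hm1 : 1 ≤ m := by
    rcases Nat.eq_zero_or_pos m with h | h
    · subst h; simp at h3
    · exact h
  have hj1 : 1 ≤ j := by
    rcases Nat.eq_zero_or_pos j with h | h
    · subst h; simp at h2
    · exact h
  have hrel : m * (a2 + b) + 2 * m = m * (a2 + 2) + m * b := by ring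
  have hjm : j < m := by
    have h4 : j * n < m * n := by
      calc j * n < m * (a2 + b) := by linarith
        _ ≤ m * n := Nat.mul_le_mul_left _ (by omega)
    exact Nat.lt_of_mul_lt_mul_right h4
  have hBl : j * n + 2 + 2 * m ≤ m * b + n := by linarith
  have hCu : m * (a2 + b) + 2 + 2 * m ≤ j * n + n := by linarith
  have hmlt : m < n := by
    have e : m * 1 ≤ m * (a2 + 2) := Nat.mul_le_mul_left _ (by omega)
    rw [Nat.mul_one] at e
    linarith
  have l1 : lpr n m = m := by
    simp only [lpr]
    rw [Nat.mod_eq_of_lt hmlt, if_neg (by omega)]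
  -- lpr n (m*(a2+b))
  have hJC : j * n ≤ m * (a2 + b) := by linarith
  have hlt2 : m * (a2 + b) - j * n < n := by
    rw [tsub_lt_iff_right hJC]; linarith
  have hge2 : 1 ≤ m * (a2 + b) - j * n := Nat.le_sub_of_add_le (by linarith)
  have hmod2 : m * (a2 + b) % n = m * (a2 + b) - j * n := by
    conv_lhs => rw [(Nat.sub_add_cancel hJC).symm]
    rw [Nat.add_mul_mod_self_right]
    exact Nat.mod_eq_of_lt hlt2
  have l2 : lpr n (m * (a2 + b)) = m * (a2 + b) - j * n := by
    simp only [lpr, hmod2]; rw [if_neg (by omega)]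
  -- lpr n (m*(n-b))
  have hBJ : m * b ≤ j * n := by linarith
  have hbn : b ≤ n := by omega
  have hjm' : j ≤ m := le_of_lt hjm
  have hxd : m * (n - b) = (j * n - m * b) + (m - j) * n := by
    zify [hbn, hBJ, hjm']
    ring
  have hlt3 : j * n - m * b < n := by
    rw [tsub_lt_iff_right hBJ]; linarith
  have hge3 : 1 ≤ j * n - m * b := Nat.le_sub_of_add_le (by linarith)
  have hmod3 : m * (n - b) % n = j * n - m * b := by
    rw [hxd, Nat.add_mul_mod_self_right]
    exact Nat.mod_eq_of_lt hlt3
  have l3 : lpr n (m * (n - b)) = j * n - m * b := by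
    simp only [lpr, hmod3]; rw [if_neg (by omega)]
  -- lpr n (m*(n-(a2+2)))
  have han : a2 + 2 ≤ n := by omega
  have hAn : m * (a2 + 2) ≤ n := by linarith
  have hyd : m * (n - (a2 + 2)) = (n - m * (a2 + 2)) + (m - 1) * n := by
    zify [han, hAn, hm1]
    ring
  have hlt4 : n - m * (a2 + 2) < n :=
    Nat.sub_lt (by omega) (Nat.mul_pos hm1 (by omega))
  have hge4 : 1 ≤ n - m * (a2 + 2) := Nat.le_sub_of_add_le (by linarith)
  have hmod4 : m * (n - (a2 + 2)) % n = n - m * (a2 + 2) := by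
    rw [hyd, Nat.add_mul_mod_self_right]
    exact Nat.mod_eq_of_lt hlt4
  have l4 : lpr n (m * (n - (a2 + 2))) = n - m * (a2 + 2) := by
    simp only [lpr, hmod4]; rw [if_neg (by omega)]
  constructor
  · rw [hn]
    exact Nat.Coprime.pow_right μ ((Nat.Prime.coprime_iff_not_dvd hp).mpr hpm).symm
  · rw [l1, l2, l3, l4]
    have hr : (m : ℤ) * (a2 + b) + 2 * m = m * (a2 + 2) + m * b := by exact_mod_cast hrel
    zify [hJC, hBJ, hAn]
    linarith

/-- Case A construction: `6c ≤ n`, a window of length 2. -/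
lemma caseA (n a2 b : ℕ) (ha2 : 4 ≤ a2) (hb4 : 4*a2 + 8 ≤ b) (hcase : 6*(a2+b) ≤ n) :
    ∃ j m0, j*n + 1 ≤ (a2+b)*m0 ∧ (a2+b)*(m0+1) ≤ j*n + 2*(a2+b) ∧
      b*(2*(a2+b)) + (a2+b) + 1 ≤ a2*(j*n) ∧
      (a2+2)*(j*n) + (a2+2)*(2*(a2+b)) + (a2+b) ≤ (a2+b)*n := by
  have hDpos : 0 < n*a2 := Nat.mul_pos (by omega) (by omega)
  have hCpos : 0 < a2+b := by omega
  obtain ⟨j, hj⟩ : ∃ j, j = (2*b*(a2+b)+(a2+b))/(n*a2) + 1 := ⟨_, rfl⟩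
  have F1 := div_lb (2*b*(a2+b)+(a2+b)) (n*a2) hDpos
  have F2 := div_ub (2*b*(a2+b)+(a2+b)) (n*a2)
  rw [← hj] at F1 F2
  obtain ⟨m0, hm0⟩ : ∃ m, m = (j*n)/(a2+b) + 1 := ⟨_, rfl⟩
  have F3 := div_lb (j*n) (a2+b) hCpos
  have F4 := div_ub (j*n) (a2+b)
  rw [← hm0] at F3 F4
  refine ⟨j, m0, by linarith [(by ring : m0*(a2+b) = (a2+b)*m0)], ?_, ?_, ?_⟩
  · have e : (a2+b)*(m0+1) = m0*(a2+b) + (a2+b) := by ring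
    linarith
  · have e : j*(n*a2) = a2*(j*n) := by ring
    linarith
  · have hred : a2*((a2+2)*(j*n) + (a2+2)*(2*(a2+b)) + (a2+b)) ≤ a2*((a2+b)*n) := by
      have e : a2*((a2+2)*(j*n) + (a2+2)*(2*(a2+b)) + (a2+b))
          = (a2+2)*(j*(n*a2)) + a2*((a2+2)*(2*(a2+b)) + (a2+b)) := by ring
      have e2 : (a2+2)*(j*(n*a2)) ≤ (a2+2)*(2*b*(a2+b)+(a2+b) + n*a2) :=
        Nat.mul_le_mul_left _ F2
      obtain ⟨v, rfl⟩ : ∃ v, a2 = v + 4 := ⟨a2 - 4, by omega⟩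
      obtain ⟨u, rfl⟩ : ∃ u, b = 4*v + 24 + u := ⟨b - (4*v+24), by omega⟩
      obtain ⟨t, rfl⟩ : ∃ t, n = 6*(5*v+28+u) + t := ⟨n - 6*(5*v+28+u), by omega⟩
      nlinarith [polyA v u t, e, e2]
    exact Nat.le_of_mul_le_mul_left hred (by omega)

/-- Case B construction: `n < 6c`, two consecutive windows. -/
lemma caseB (n a2 b : ℕ) (ha2 : 4 ≤ a2) (hb4 : 4*a2 + 8 ≤ b) (hcn : 2*(a2+b) < n)
    (hn289 : 289 ≤ n) (hcase : n < 6*(a2+b)) :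
    ∃ j m1 m2, j*n + 1 ≤ (a2+b)*m1 ∧ (a2+b)*m1 ≤ j*n + (a2+b) ∧
      (j+1)*n + 1 ≤ (a2+b)*m2 ∧ (a2+b)*m2 ≤ (j+1)*n + (a2+b) ∧
      b*(a2+b) + (a2+b) + 1 ≤ a2*(j*n) ∧
      (a2+2)*((j+1)*n) + (a2+2)*(a2+b) + (a2+b) ≤ (a2+b)*n := by
  have hDpos : 0 < n*a2 := Nat.mul_pos (by omega) (by omega)
  have hCpos : 0 < a2+b := by omega
  obtain ⟨j, hj⟩ : ∃ j, j = (b*(a2+b)+(a2+b))/(n*a2) + 1 := ⟨_, rfl⟩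
  have F1 := div_lb (b*(a2+b)+(a2+b)) (n*a2) hDpos
  have F2 := div_ub (b*(a2+b)+(a2+b)) (n*a2)
  rw [← hj] at F1 F2
  obtain ⟨m1, hm1⟩ : ∃ m, m = (j*n)/(a2+b) + 1 := ⟨_, rfl⟩
  have F3a := div_lb (j*n) (a2+b) hCpos
  have F4a := div_ub (j*n) (a2+b)
  rw [← hm1] at F3a F4a
  obtain ⟨m2, hm2⟩ : ∃ m, m = ((j+1)*n)/(a2+b) + 1 := ⟨_, rfl⟩
  have F3b := div_lb ((j+1)*n) (a2+b) hCpos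
  have F4b := div_ub ((j+1)*n) (a2+b)
  rw [← hm2] at F3b F4b
  refine ⟨j, m1, m2,
    by linarith [(by ring : m1*(a2+b) = (a2+b)*m1)],
    by linarith [(by ring : m1*(a2+b) = (a2+b)*m1)],
    by linarith [(by ring : m2*(a2+b) = (a2+b)*m2)],
    by linarith [(by ring : m2*(a2+b) = (a2+b)*m2)],
    by linarith [(by ring : j*(n*a2) = a2*(j*n))], ?_⟩
  have hred : a2*((a2+2)*((j+1)*n) + (a2+2)*(a2+b) + (a2+b)) ≤ a2*((a2+b)*n) := by
    have e : a2*((a2+2)*((j+1)*n) + (a2+2)*(a2+b) + (a2+b))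
        = (a2+2)*(j*(n*a2)) + (a2+2)*(n*a2) + a2*((a2+2)*(a2+b) + (a2+b)) := by ring
    have e2 : (a2+2)*(j*(n*a2)) ≤ (a2+2)*(b*(a2+b)+(a2+b) + n*a2) :=
      Nat.mul_le_mul_left _ F2
    obtain ⟨v, rfl⟩ : ∃ v, a2 = v + 4 := ⟨a2 - 4, by omega⟩
    obtain ⟨u, rfl⟩ : ∃ u, b = 4*v + 24 + u := ⟨b - (4*v+24), by omega⟩
    obtain ⟨t, rfl⟩ : ∃ t, n = 2*(5*v+28+u) + 1 + t := ⟨n - (2*(5*v+28+u)+1), by omega⟩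
    have h289 : 232 ≤ 10*v + 2*u + t := by omega
    nlinarith [polyB v u t h289, e, e2]
  exact Nat.le_of_mul_le_mul_left hred (by omega)

theorem stmt_6 (p μ n a b c : ℕ) (hp : p.Prime) (hp7 : 7 ≤ p) (hμ : 2 ≤ μ)
    (hn : n = p ^ μ) (hn289 : 289 ≤ n)
    (ha : 6 ≤ a) (hab : a ≤ b) (hbc : b < c) (hc : 2 * c < n)
    (hcab : c = a + b - 2) (hs : 4 ≤ b / a)
    (hzs : n ∣ ∑ i, (![1, 1, c, n - b, n - a] : Fin 5 → ℕ) i)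
    (hmin : ∀ s : Finset (Fin 5), s.Nonempty → s ≠ Finset.univ →
      ¬ n ∣ ∑ i ∈ s, (![1, 1, c, n - b, n - a] : Fin 5 → ℕ) i) :
    ∃ m : ℕ, Nat.gcd m n = 1 ∧
      lpr n m + lpr n m + lpr n (m * c) + lpr n (m * (n - b)) +
        lpr n (m * (n - a)) = n := by
  clear hzs hmin
  have h4a : 4 * a ≤ b := (Nat.le_div_iff_mul_le (by omega)).mp hs
  obtain ⟨a2, rfl⟩ : ∃ a2, a = a2 + 2 := ⟨a - 2, by omega⟩
  have ha2 : 4 ≤ a2 := by omega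
  have hb4 : 4 * a2 + 8 ≤ b := by omega
  have hc' : c = a2 + b := by omega
  subst hc'
  by_cases hcase : 6 * (a2 + b) ≤ n
  · -- Case A
    obtain ⟨j, m0, hF3, hF4', hwin, hA⟩ := caseA n a2 b ha2 hb4 hcase
    have hF4 : (a2+b)*m0 ≤ j*n + 2*(a2+b) := by
      have e : (a2+b)*(m0+1) = (a2+b)*m0 + (a2+b) := by ring
      linarith
    have hF3' : j*n + 1 ≤ (a2+b)*(m0+1) := by
      have e : (a2+b)*(m0+1) = (a2+b)*m0 + (a2+b) := by ring
      linarith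
    by_cases hdvd : p ∣ m0
    · have hpm : ¬ p ∣ (m0 + 1) := by
        intro h
        have := Nat.dvd_sub h hdvd
        simp at this
        omega
      obtain ⟨g1, g2, g3⟩ := build n a2 b j (m0+1) (2*(a2+b)) ha2 hF3' hF4' hwin hA
      exact ⟨m0 + 1, core_s6 p μ n a2 b (m0+1) j hp hn hpm ha2 (by omega) hc g1 g2 g3⟩
    · obtain ⟨g1, g2, g3⟩ := build n a2 b j m0 (2*(a2+b)) ha2 hF3 hF4 hwin hA
      exact ⟨m0, core_s6 p μ n a2 b m0 j hp hn hdvd ha2 (by omega) hc g1 g2 g3⟩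
  · -- Case B
    push_neg at hcase
    obtain ⟨j, m1, m2, hF3a, hF4a, hF3b, hF4b, hwin, hA1⟩ :=
      caseB n a2 b ha2 hb4 hc hn289 hcase
    have hjn : j*n ≤ (j+1)*n := Nat.mul_le_mul_right n (by omega)
    have hwin1 : b*(a2+b) + (a2+b) + 1 ≤ a2*((j+1)*n) := by
      have : a2*(j*n) ≤ a2*((j+1)*n) := Nat.mul_le_mul_left _ hjn
      linarith
    have hA0 : (a2+2)*(j*n) + (a2+2)*(a2+b) + (a2+b) ≤ (a2+b)*n := by
      have : (a2+2)*(j*n) ≤ (a2+2)*((j+1)*n) := Nat.mul_le_mul_left _ hjn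
      linarith
    -- m1 < m2 ≤ m1 + 6
    have hm12 : m1 < m2 := by
      have h5 : (a2+b)*m1 < (a2+b)*m2 := by
        have e : (j+1)*n = j*n + n := by ring
        linarith
      exact Nat.lt_of_mul_lt_mul_left h5
    have hm26 : m2 ≤ m1 + 6 := by
      have h5 : (a2+b)*m2 < (a2+b)*(m1+7) := by
        have e : (j+1)*n = j*n + n := by ring
        have e2 : (a2+b)*(m1+7) = (a2+b)*m1 + 7*(a2+b) := by ring
        linarith
      have := Nat.lt_of_mul_lt_mul_left h5
      omega
    by_cases hdvd : p ∣ m1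
    · have hpm : ¬ p ∣ m2 := by
        intro h
        have hd : p ∣ m2 - m1 := Nat.dvd_sub h hdvd
        have := Nat.le_of_dvd (by omega) hd
        omega
      obtain ⟨g1, g2, g3⟩ := build n a2 b (j+1) m2 (a2+b) ha2 hF3b hF4b hwin1 hA1
      exact ⟨m2, core_s6 p μ n a2 b m2 (j+1) hp hn hpm ha2 (by omega) hc g1 g2 g3⟩
    · obtain ⟨g1, g2, g3⟩ := build n a2 b j m1 (a2+b) ha2 hF3a hF4a hwin hA0
      exact ⟨m1, core_s6 p μ n a2 b m1 j hp hn hdvd ha2 (by omega) hc g1 g2 g3⟩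
end

section
/- Let n = p^μ be a prime power with p ≥ 7, μ ≥ 2, and n ≥ 289. Let a, b, c be integers with 6 ≤ a ≤ b < c < n/2, c = a + b − 2, and ⌊b/a⌋ ≤ 3, such that (1, 1, c, n−b, n−a) is a minimal zero-sum sequence over Z/n. Then there exists a unit m modulo n with |m|_n + |m|_n + |m·c|_n + |m·(n−b)|_n + |m·(n−a)|_n = n. -/
set_option maxHeartbeats 1000000

lemma H1_tbound (T N A B C : ℤ) (ht : 5 ≤ T) (hn : 289 ≤ N)
    (e1 : C*T ≤ N) (e4 : N+1 ≤ B*T+B)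
    (habc : A+B = C+2) (hb4 : B+1 ≤ 4*A) (ha : 6 ≤ A) : False := by
  have hA : (T+1)*(C*T) ≤ (T+1)*N := mul_le_mul_of_nonneg_left e1 (by linarith)
  have hB : T*(N+1) ≤ T*(B*T+B) := mul_le_mul_of_nonneg_left e4 (by linarith)
  have hC : T*(T+1)*(A+B) = T*(T+1)*(C+2) := by rw [habc]
  have I1 : T*(T+1)*A ≤ N + 2*T^2 + T := by linarith [hA, hB, hC]
  have hD : (T+1)*(B+1) ≤ (T+1)*(4*A) := mul_le_mul_of_nonneg_left hb4 (by linarith)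
  have I2 : N + T + 2 ≤ 4*(T+1)*A := by linarith [hD, e4]
  have hE : T*(N+T+2) ≤ T*(4*(T+1)*A) := mul_le_mul_of_nonneg_left I2 (by linarith)
  have hn2 : T*N ≤ 4*N + 7*T^2 + 2*T := by linarith [hE, I1]
  have hF : 6*(T*(T+1)) ≤ A*(T*(T+1)) :=
    mul_le_mul_of_nonneg_right ha (by nlinarith)
  have hn1 : 4*T^2 + 5*T ≤ N := by linarith [hF, I1]
  have k1 : (0:ℤ) ≤ T - 5 := by linarith
  have k2 : (0:ℤ) ≤ 4*T^2 - 2*T - 37 := by nlinarith [mul_nonneg k1 k1]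
  nlinarith [mul_nonneg k1 k2, mul_nonneg k1 (by linarith : (0:ℤ) ≤ N - 4*T^2 - 5*T)]

lemma H2_tbound (T N A B C : ℤ) (ht : 12 ≤ T) (hn : 289 ≤ N)
    (e1 : C*T ≤ N) (e4 : N+1 ≤ B*T+2*B)
    (habc : A+B = C+2) (hb4 : B+1 ≤ 4*A) (ha : 6 ≤ A) : False := by
  have hA : (T+2)*(C*T) ≤ (T+2)*N := mul_le_mul_of_nonneg_left e1 (by linarith)
  have hB : T*(N+1) ≤ T*(B*T+2*B) := mul_le_mul_of_nonneg_left e4 (by linarith)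
  have hC : T*(T+2)*(A+B) = T*(T+2)*(C+2) := by rw [habc]
  have I1 : T*(T+2)*A ≤ 2*N + 2*T^2 + 3*T := by linarith [hA, hB, hC]
  have hD : (T+2)*(B+1) ≤ (T+2)*(4*A) := mul_le_mul_of_nonneg_left hb4 (by linarith)
  have I2 : N + T + 3 ≤ 4*(T+2)*A := by linarith [hD, e4]
  have hE : T*(N+T+3) ≤ T*(4*(T+2)*A) := mul_le_mul_of_nonneg_left I2 (by linarith)
  have hn2 : T*N ≤ 8*N + 7*T^2 + 9*T := by linarith [hE, I1]
  have hF : 6*(T*(T+2)) ≤ A*(T*(T+2)) :=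
    mul_le_mul_of_nonneg_right ha (by nlinarith)
  have hn1 : 4*T^2 + 9*T ≤ 2*N := by linarith [hF, I1]
  have k1 : (0:ℤ) ≤ T - 12 := by linarith
  have k2 : (0:ℤ) ≤ 4*T^2 - 5*T - 186 := by nlinarith [mul_nonneg k1 k1]
  nlinarith [mul_nonneg k1 k2, mul_nonneg k1 (by linarith : (0:ℤ) ≤ 2*N - 4*T^2 - 9*T)]


lemma key_lemma (n a b c m : ℕ) (hg : Nat.gcd m n = 1) (hm0 : 0 < m) (hm2 : 2*m < n)
    (ha0 : 0 < a) (han : a < n) (hb0 : 0 < b) (hbn : b < n)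
    (hc0 : 0 < c) (hcn : c < n) (habc : a + b = c + 2)
    (hcond : n + 2*m ≤ m*a % n + m*b % n) :
    lpr n m + lpr n m + lpr n (m*c) + lpr n (m*(n-b)) + lpr n (m*(n-a)) = n := by
  have hn : 0 < n := by omega
  have hndvd : ∀ x : ℕ, 0 < x → x < n → ¬ (m * x % n = 0) := by
    intro x hx0 hxn h
    have hd : n ∣ m * x := Nat.dvd_of_mod_eq_zero h
    have hcop : Nat.Coprime n m := Nat.coprime_comm.mp hg
    have h2 : n ∣ x := hcop.dvd_of_dvd_mul_left hd
    have := Nat.le_of_dvd hx0 h2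
    omega
  have hneg : ∀ x : ℕ, x ≤ n → ¬(m*x % n = 0) → m*(n-x) % n = n - m*x % n := by
    intro x hxn hx
    have h1 : m*(n-x) + m*x = m*n := by
      rw [← Nat.mul_add]; congr 1; omega
    have h2 : (m*(n-x) + m*x) % n = 0 := by rw [h1]; exact Nat.mul_mod_left m n
    rw [Nat.add_mod] at h2
    have h4 : n ∣ (m*(n-x) % n + m*x % n) := Nat.dvd_of_mod_eq_zero h2
    have h5 : m*(n-x) % n < n := Nat.mod_lt _ hn
    have h6 : m*x % n < n := Nat.mod_lt _ hn
    obtain ⟨k, hk⟩ := h4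
    rcases Nat.lt_or_ge k 2 with h|h
    · interval_cases k <;> omega
    · have : n*2 ≤ n*k := Nat.mul_le_mul_left n h
      omega
  have hra := hndvd a ha0 han
  have hrb := hndvd b hb0 hbn
  have hrc := hndvd c hc0 hcn
  have hXb := hneg b (by omega) hrb
  have hYa := hneg a (by omega) hra
  have hmlt : m % n = m := Nat.mod_eq_of_lt (by omega)
  have habm : m*a + m*b = m*c + 2*m := by rw [← Nat.mul_add, habc]; ring
  have hmodeq : (m*c + 2*m) % n = (m*a + m*b) % n := by rw [habm]
  have h6 : m*a % n < n := Nat.mod_lt _ hn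
  have h7 : m*b % n < n := Nat.mod_lt _ hn
  have hab2 : (m*a + m*b) % n = m*a%n + m*b%n - n := by
    rw [Nat.add_mod]
    rw [Nat.mod_eq_sub_mod (by omega)]
    exact Nat.mod_eq_of_lt (by omega)
  have hc2 : (m*c + 2*m) % n = (m*c % n + 2*m) % n := by
    conv_lhs => rw [Nat.add_mod]
    rw [Nat.mod_eq_of_lt hm2]
  have h8 : m*c % n < n := Nat.mod_lt _ hn
  have hrcval : m*c % n = m*a%n + m*b%n - n - 2*m := by
    rcases Nat.lt_or_ge (m*c % n + 2*m) n with h|h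
    · have h9 : (m*c%n + 2*m) % n = m*c%n + 2*m := Nat.mod_eq_of_lt h
      omega
    · have h9 : (m*c%n + 2*m) % n = m*c%n + 2*m - n := by
        rw [Nat.mod_eq_sub_mod h]; exact Nat.mod_eq_of_lt (by omega)
      omega
  have hrc' : ¬(m*a%n + m*b%n - n - 2*m = 0) := by omega
  unfold lpr
  rw [hXb, hYa, hrcval, hmlt]
  rw [if_neg (show ¬ m = 0 by omega), if_neg hrc',
    if_neg (show ¬ (n - m*b%n) = 0 by omega), if_neg (show ¬ (n - m*a%n) = 0 by omega)]
  omega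

theorem stmt_7 (p μ n a b c : ℕ) (hp : p.Prime) (hp7 : 7 ≤ p) (hμ : 2 ≤ μ)
    (hn : n = p ^ μ) (hn289 : 289 ≤ n)
    (ha : 6 ≤ a) (hab : a ≤ b) (hbc : b < c) (hc : 2 * c < n)
    (hcab : c = a + b - 2) (hs : b / a ≤ 3)
    (hzs : n ∣ ∑ i, (![1, 1, c, n - b, n - a] : Fin 5 → ℕ) i)
    (hmin : ∀ s : Finset (Fin 5), s.Nonempty → s ≠ Finset.univ →
      ¬ n ∣ ∑ i ∈ s, (![1, 1, c, n - b, n - a] : Fin 5 → ℕ) i) :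
    ∃ m : ℕ, Nat.gcd m n = 1 ∧
      lpr n m + lpr n m + lpr n (m * c) + lpr n (m * (n - b)) +
        lpr n (m * (n - a)) = n := by
  clear hzs hmin
  have habc : a + b = c + 2 := by omega
  have hcn : c < n := by omega
  have hbn : b < n := by omega
  have han : a < n := by omega
  have hb0 : 0 < b := by omega
  have hc0 : 0 < c := by omega
  have hc10 : 10 ≤ c := by omega
  have hb4a : b < 4*a := by
    have h1 := Nat.div_add_mod b a
    have h2 : b % a < a := Nat.mod_lt _ (by omega)
    have h3 : a * (b/a) ≤ a * 3 := Nat.mul_le_mul_left a hs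
    omega
  have copr : ∀ m : ℕ, ¬ p ∣ m → Nat.gcd m n = 1 := by
    intro m hm
    rw [hn]
    exact (((Nat.Prime.coprime_iff_not_dvd hp).mpr hm).symm).pow_right μ
  suffices hex : ∃ m : ℕ, 0 < m ∧ 2*m < n ∧ ¬ p ∣ m ∧ n + 2*m ≤ m*a % n + m*b % n by
    obtain ⟨m, h1, h2, h3, h4⟩ := hex
    have hg := copr m h3
    exact ⟨m, hg, key_lemma n a b c m hg h1 h2 (by omega) han hb0 hbn hc0 hcn habc h4⟩
  have hdc := Nat.div_add_mod n c
  have hmc : n % c < c := Nat.mod_lt _ hc0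
  set t := n / c with htdef
  have ht2 : 2 ≤ t := (Nat.le_div_iff_mul_le hc0).mpr (by omega)
  have e1 : c * t ≤ n := by omega
  have e2 : n + 1 ≤ c * t + c := by omega
  have htub : 10 * t ≤ n := by
    have h10 : t ≤ n / 10 := Nat.div_le_div_left hc10 (by norm_num)
    have h11 := Nat.div_add_mod n 10
    have h12 : n % 10 < 10 := Nat.mod_lt _ (by norm_num)
    omega
  -- generic main-case helper
  have hgen : ∀ m : ℕ, t+1 ≤ m → m ≤ t+2 → m * b ≤ n → ¬ p ∣ m →
      0 < m ∧ 2*m < n ∧ ¬ p ∣ m ∧ n + 2*m ≤ m*a % n + m*b % n := by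
    intro m hm1 hm2' hmbn hpm
    have h2m : 2*m < n := by omega
    have hmbne : m * b ≠ n := by
      intro h
      have hdvd : m ∣ n := ⟨b, h.symm⟩
      have hg1 := copr m hpm
      have := Nat.gcd_eq_left hdvd
      omega
    have hmb_lt : m*b < n := by omega
    have hma_le : m*a ≤ m*b := Nat.mul_le_mul_left m hab
    have hcm : n + 1 ≤ m * c := by
      have h1 : (t+1) * c ≤ m * c := Nat.mul_le_mul_right c hm1
      have h2 : (t+1) * c = c * t + c := by ring
      omega
    have hsum : m*a + m*b = m*c + 2*m := by rw [← Nat.mul_add, habc]; ring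
    refine ⟨by omega, h2m, hpm, ?_⟩
    rw [Nat.mod_eq_of_lt (by omega : m*a < n), Nat.mod_eq_of_lt hmb_lt]
    omega
  by_cases h1 : (t+1) * b ≤ n
  · by_cases h2 : p ∣ (t+1)
    · by_cases h3 : (t+2) * b ≤ n
      · refine ⟨t+2, hgen (t+2) (by omega) le_rfl h3 ?_⟩
        intro hd
        have hd1 : p ∣ 1 := by
          have := Nat.dvd_sub hd h2
          simpa using this
        have := Nat.dvd_one.mp hd1
        omega
      · -- H2 : n/b = t+1, p ∣ t+1
        push_neg at h3
        have hr1 : (t+2)*b = b*t + 2*b := by ring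
        have hr2 : (t+1)*b = b*t + b := by ring
        have e4 : n + 1 ≤ b * t + 2 * b := by omega
        have e3 : b * t + b ≤ n := by omega
        have hpt : p ≤ t + 1 := Nat.le_of_dvd (by omega) h2
        have ht6 : 6 ≤ t := by omega
        -- bound t ≤ 11
        have ht11 : t ≤ 11 := by
          by_contra hcon
          push_neg at hcon
          refine H2_tbound (t:ℤ) (n:ℤ) (a:ℤ) (b:ℤ) (c:ℤ) (by exact_mod_cast hcon)
            (by exact_mod_cast hn289) (by exact_mod_cast e1) (by exact_mod_cast e4)
            (by exact_mod_cast habc) (by exact_mod_cast hb4a) (by exact_mod_cast ha)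
        interval_cases t
        · -- t = 6, p ∣ 7 so p = 7
          have hp7' : p = 7 := by omega
          refine ⟨20, by norm_num, by omega, by rw [hp7']; decide, ?_⟩
          have ha1 : 20*a < n := by omega
          have hb1 : n ≤ 20*b := by omega
          have hb2 : n ≤ 20*b - n := by omega
          have hb3 : 20*b - n - n < n := by omega
          have ea : 20*a % n = 20*a := Nat.mod_eq_of_lt ha1
          have eb : 20*b % n = 20*b - 2*n := by
            rw [Nat.mod_eq_sub_mod hb1, Nat.mod_eq_sub_mod hb2, Nat.mod_eq_of_lt hb3]
            omega
          rw [ea, eb]; omega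
        · -- t = 7, p ∣ 8
          exfalso
          have : p = 7 ∨ p = 8 := by omega
          rcases this with h|h
          · subst h; revert h2; decide
          · rw [h] at hp; norm_num at hp
        · -- t = 8, p ∣ 9
          exfalso
          have : p = 7 ∨ p = 8 ∨ p = 9 := by omega
          rcases this with h|h|h
          · subst h; revert h2; decide
          · rw [h] at hp; norm_num at hp
          · rw [h] at hp; norm_num at hp
        · -- t = 9, p ∣ 10
          exfalso
          have : p = 7 ∨ p = 8 ∨ p = 9 ∨ p = 10 := by omega
          rcases this with h|h|h|h
          · subst h; revert h2; decide
          · rw [h] at hp; norm_num at hp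
          · rw [h] at hp; norm_num at hp
          · rw [h] at hp; norm_num at hp
        · -- t = 10, p ∣ 11 so p = 11
          exfalso
          have hp11 : p = 11 := by
            have : p = 7 ∨ p = 8 ∨ p = 9 ∨ p = 10 ∨ p = 11 := by omega
            rcases this with h|h|h|h|h
            · subst h; revert h2; decide
            · rw [h] at hp; norm_num at hp
            · rw [h] at hp; norm_num at hp
            · rw [h] at hp; norm_num at hp
            · exact h
          have hn1331 : 1331 ≤ n := by
            rcases Nat.lt_or_ge μ 3 with h|h
            · have : μ = 2 := by omega
              rw [hp11, this] at hn; omega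
            · have : 11^3 ≤ 11^μ := Nat.pow_le_pow_right (by norm_num) h
              rw [hp11] at hn; omega
          omega
        · -- t = 11, p ∣ 12
          exfalso
          have : p = 7 ∨ p = 8 ∨ p = 9 ∨ p = 10 ∨ p = 11 ∨ p = 12 := by omega
          rcases this with h|h|h|h|h|h
          · subst h; revert h2; decide
          · rw [h] at hp; norm_num at hp
          · rw [h] at hp; norm_num at hp
          · rw [h] at hp; norm_num at hp
          · subst h; revert h2; decide
          · rw [h] at hp; norm_num at hp
    · exact ⟨t+1, hgen (t+1) le_rfl (by omega) h1 h2⟩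
  · -- H1 : n/b = t
    push_neg at h1
    have hnb : n / b = t := by
      have hub : n / b < t + 1 := (Nat.div_lt_iff_lt_mul hb0).mpr (by omega)
      have hlb : t ≤ n / b := Nat.div_le_div_left (le_of_lt hbc) hb0
      omega
    have e3 : b * t ≤ n := by
      have h4 : b * (n/b) ≤ n := by
        have := Nat.div_add_mod n b
        omega
      calc b * t = b * (n/b) := by rw [hnb]
        _ ≤ n := h4
    have hr2 : (t+1)*b = b*t + b := by ring
    have e4 : n + 1 ≤ b * t + b := by omega
    -- bound t ≤ 4
    have ht4 : t ≤ 4 := by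
      by_contra hcon
      push_neg at hcon
      refine H1_tbound (t:ℤ) (n:ℤ) (a:ℤ) (b:ℤ) (c:ℤ) (by exact_mod_cast hcon)
        (by exact_mod_cast hn289) (by exact_mod_cast e1) (by exact_mod_cast e4)
        (by exact_mod_cast habc) (by exact_mod_cast hb4a) (by exact_mod_cast ha)
    interval_cases t
    · -- t = 2
      rcases Nat.lt_or_ge (5*b) (2*n) with h5b | h5b
      · -- m = 5
        refine ⟨5, by norm_num, by omega, ?_, ?_⟩
        · intro hd
          have := Nat.le_of_dvd (by norm_num) hd
          omega
        · have ha1 : 5*a < n := by omega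
          have hb1 : n ≤ 5*b := by omega
          have hb2 : 5*b - n < n := by omega
          have ea : 5*a % n = 5*a := Nat.mod_eq_of_lt ha1
          have eb : 5*b % n = 5*b - n := by
            rw [Nat.mod_eq_sub_mod hb1]; exact Nat.mod_eq_of_lt hb2
          rw [ea, eb]; omega
      · -- m = 9
        refine ⟨9, by norm_num, by omega, ?_, ?_⟩
        · intro hd
          have := Nat.le_of_dvd (by norm_num) hd
          have : p = 7 ∨ p = 8 ∨ p = 9 := by omega
          rcases this with h|h|h
          · subst h; revert hd; decide
          · rw [h] at hp; norm_num at hp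
          · rw [h] at hp; norm_num at hp
        · have ha1 : 9*a < n := by omega
          have hb1 : n ≤ 9*b := by omega
          have hb2 : n ≤ 9*b - n := by omega
          have hb3 : n ≤ 9*b - n - n := by omega
          have hb4 : 9*b - n - n - n < n := by omega
          have ea : 9*a % n = 9*a := Nat.mod_eq_of_lt ha1
          have eb : 9*b % n = 9*b - 3*n := by
            rw [Nat.mod_eq_sub_mod hb1, Nat.mod_eq_sub_mod hb2,
                Nat.mod_eq_sub_mod hb3, Nat.mod_eq_of_lt hb4]
            omega
          rw [ea, eb]; omega
    · -- t = 3, m = 10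
      refine ⟨10, by norm_num, by omega, ?_, ?_⟩
      · intro hd
        have := Nat.le_of_dvd (by norm_num) hd
        have : p = 7 ∨ p = 8 ∨ p = 9 ∨ p = 10 := by omega
        rcases this with h|h|h|h
        · subst h; revert hd; decide
        · rw [h] at hp; norm_num at hp
        · rw [h] at hp; norm_num at hp
        · rw [h] at hp; norm_num at hp
      · have ha1 : 10*a < n := by omega
        have hb1 : n ≤ 10*b := by omega
        have hb2 : n ≤ 10*b - n := by omega
        have hb3 : 10*b - n - n < n := by omega
        have ea : 10*a % n = 10*a := Nat.mod_eq_of_lt ha1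
        have eb : 10*b % n = 10*b - 2*n := by
          rw [Nat.mod_eq_sub_mod hb1, Nat.mod_eq_sub_mod hb2, Nat.mod_eq_of_lt hb3]
          omega
        rw [ea, eb]; omega
    · -- t = 4, m = 9
      refine ⟨9, by norm_num, by omega, ?_, ?_⟩
      · intro hd
        have := Nat.le_of_dvd (by norm_num) hd
        have : p = 7 ∨ p = 8 ∨ p = 9 := by omega
        rcases this with h|h|h
        · subst h; revert hd; decide
        · rw [h] at hp; norm_num at hp
        · rw [h] at hp; norm_num at hp
      · have ha1 : 9*a < n := by omega
        have hb1 : n ≤ 9*b := by omega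
        have hb2 : 9*b - n < n := by omega
        have ea : 9*a % n = 9*a := Nat.mod_eq_of_lt ha1
        have eb : 9*b % n = 9*b - n := by
          rw [Nat.mod_eq_sub_mod hb1]; exact Nat.mod_eq_of_lt hb2
        rw [ea, eb]; omega
end

section
/- Let n = p^μ be a prime power with p ≥ 7, μ ≥ 2, and n ≥ 289. Let a ∈ {4, 5} and let b, c be integers with a ≤ b < c < n/2, c = a + b − 2, and ⌊b/a⌋ ≥ 11, such that (1, 1, c, n−b, n−a) is a minimal zero-sum sequence over Z/n. Then the sequence has index 1, i.e., there exists a unit m modulo n with |m|_n + |m|_n + |m·c|_n + |m·(n−b)|_n + |m·(n−a)|_n = n. -/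
private lemma ap_mem (m0 step lo hi : ℕ) (h0 : 0 < step) (h1 : m0 < step)
    (h2 : lo + step ≤ hi + 1) : ∃ s, lo ≤ m0 + step * s ∧ m0 + step * s ≤ hi := by
  refine ⟨(lo + step - 1 - m0) / step, ?_, ?_⟩ <;>
  · have hd := Nat.div_add_mod (lo + step - 1 - m0) step
    have hm := Nat.mod_lt (lo + step - 1 - m0) h0
    omega

private lemma exists_inv {x N : ℕ} (hN : 1 ≤ N) (h : Nat.Coprime x N) :
    ∃ y, x * y ≡ 1 [MOD N] := by
  have hφ : 0 < N.totient := Nat.totient_pos.mpr (by omega)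
  have he := Nat.ModEq.pow_totient h
  refine ⟨x ^ (N.totient - 1), ?_⟩
  have hx : x * x ^ (N.totient - 1) = x ^ N.totient := by
    rw [← pow_succ']; congr 1; omega
  rw [hx]; exact he

private lemma ineq1 {g h : ℕ} (h1 : 7 ≤ g) (h2 : 7 ≤ h) (h3 : 289 ≤ g * h) :
    5*g + 10*h + 2 ≤ 2*(g*h) := by
  rcases le_or_gt 10 h with hh | hh
  · nlinarith
  · have hg : 33 ≤ g := by nlinarith
    nlinarith

private lemma ineq2 {g h : ℕ} (h1 : 7 ≤ g) (h2 : 7 ≤ h) (h3 : 289 ≤ g * h) :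
    5*g + 5*h + 1 ≤ g*h := by
  rcases le_or_gt 18 h with hh | hh
  · nlinarith
  · have hg : 17 ≤ g := by nlinarith
    nlinarith

-- Case p ∣ b  (t = g = gcd(b,n))
private lemma caseB0 (p μ n a b : ℕ) (hp : p.Prime) (hp7 : 7 ≤ p) (hμ : 2 ≤ μ)
    (hn : n = p ^ μ) (hn289 : 289 ≤ n) (ha4 : 4 ≤ a) (ha5 : a ≤ 5)
    (hb44 : 44 ≤ b) (hbn : 2*b + 5 ≤ n) (hpb : p ∣ b) :
    ∃ m t : ℕ, 1 ≤ m ∧ a * m + 1 ≤ n ∧ 1 ≤ t ∧ t + 1 ≤ (a - 2) * m ∧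
      n ∣ m * b + t ∧ ¬ p ∣ m := by
  have hpn : p ∣ n := hn ▸ dvd_pow_self p (by omega : μ ≠ 0)
  set g := Nat.gcd b n with hgdef
  have hgb : g ∣ b := Nat.gcd_dvd_left b n
  have hgn : g ∣ n := Nat.gcd_dvd_right b n
  have hpg : p ∣ g := Nat.dvd_gcd hpb hpn
  have hg0 : 0 < g := Nat.gcd_pos_of_pos_left n (by omega)
  have hg7 : 7 ≤ g := le_trans hp7 (Nat.le_of_dvd hg0 hpg)
  obtain ⟨j, hjμ, hgj⟩ := (Nat.dvd_prime_pow hp).mp (hn ▸ hgn)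
  have hjlt : j < μ := by
    by_contra hcon
    have hje : j = μ := by omega
    have : n ∣ b := by rw [hn, ← hje, ← hgj]; exact hgb
    have := Nat.le_of_dvd (by omega) this
    omega
  set h' := n / g with hh'def
  have hgh : g * h' = n := Nat.mul_div_cancel' hgn
  have hh'eq : h' = p ^ (μ - j) := by
    rw [hh'def, hn, hgj, Nat.pow_div (by omega) hp.pos]
  have hph' : p ∣ h' := by
    rw [hh'eq]; exact dvd_pow_self p (by omega)
  have hh'0 : 0 < h' := by
    rw [hh'eq]; exact pow_pos hp.pos _
  have hh'7 : 7 ≤ h' := le_trans hp7 (Nat.le_of_dvd hh'0 hph')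
  set w := b / g with hwdef
  have hbw : g * w = b := Nat.mul_div_cancel' hgb
  have hco : Nat.Coprime w h' := Nat.coprime_div_gcd_div_gcd hg0
  obtain ⟨y, hy⟩ := exists_inv (by omega : 1 ≤ h') hco
  set m0 := ((h' - 1) * y) % h' with hm0def
  have hm0lt : m0 < h' := Nat.mod_lt _ (by omega)
  have hineq : 5*g + 10*h' + 2 ≤ 2*(g*h') := ineq1 hg7 hh'7 (by rw [hgh]; omega)
  have hhi : (g/2 + h') * a ≤ n - 1 := by
    have h1 : (g/2 + h') * a ≤ (g/2 + h') * 5 := Nat.mul_le_mul_left _ ha5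
    have h2 : 2 * ((g/2) * 5) ≤ 5 * g := by omega
    omega
  have hap : (g/2 + 1) + h' ≤ (n-1)/a + 1 := by
    have := (Nat.le_div_iff_mul_le (by omega : 0 < a)).mpr hhi
    omega
  obtain ⟨s, hs1, hs2⟩ := ap_mem m0 h' (g/2 + 1) ((n-1)/a) hh'0 hm0lt hap
  set m := m0 + h' * s with hmdef
  have hcapm : m * a ≤ n - 1 := (Nat.le_div_iff_mul_le (by omega : 0 < a)).mp hs2
  have hmam : m * a = a * m := Nat.mul_comm m a
  -- congruence
  have c1 : m ≡ m0 [MOD h'] := by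
    show m % h' = m0 % h'
    rw [hmdef]
    exact Nat.add_mul_mod_self_left m0 h' s
  have c2 : m0 ≡ (h'-1)*y [MOD h'] := Nat.mod_modEq _ _
  have c3 : m * w ≡ (h'-1) * (w*y) [MOD h'] := by
    calc m*w ≡ m0*w [MOD h'] := c1.mul_right w
    _ ≡ ((h'-1)*y)*w [MOD h'] := c2.mul_right w
    _ = (h'-1)*(w*y) := by ring
  have c4 : (h'-1)*(w*y) ≡ (h'-1) * 1 [MOD h'] := hy.mul_left _
  have c5 : m*w + 1 ≡ (h'-1) + 1 [MOD h'] := by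
    have := (c3.trans c4).add_right 1
    simpa using this
  have c6 : m*w + 1 ≡ 0 [MOD h'] := by
    have he : (h'-1) + 1 = h' := by omega
    rw [he] at c5
    exact c5.trans (Nat.modEq_zero_iff_dvd.mpr dvd_rfl)
  obtain ⟨lam, hlam⟩ := Nat.modEq_zero_iff_dvd.mp c6
  have h2am : 2*m ≤ (a-2)*m := Nat.mul_le_mul_right m (by omega)
  refine ⟨m, g, by omega, by omega, by omega, by omega, ⟨lam, ?_⟩, ?_⟩
  · have e1 : m*b + g = g*(m*w + 1) := by rw [← hbw]; ring
    rw [e1, hlam, ← hgh]; ring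
  · intro hpm
    have hd1 : p ∣ m*w + 1 := hlam ▸ Dvd.dvd.mul_right hph' lam
    have hd2 : p ∣ m*w := Dvd.dvd.mul_right hpm w
    have hd3 : p ∣ 1 := by
      have := Nat.dvd_sub hd1 hd2
      simpa using this
    have := Nat.le_of_dvd (by norm_num) hd3
    omega

-- Case p ∣ b+1  (t = m - g)
private lemma caseB1 (p μ n a b : ℕ) (hp : p.Prime) (hp7 : 7 ≤ p) (hμ : 2 ≤ μ)
    (hn : n = p ^ μ) (hn289 : 289 ≤ n) (ha4 : 4 ≤ a) (ha5 : a ≤ 5)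
    (hb44 : 44 ≤ b) (hbn : 2*b + 5 ≤ n) (hpb1 : p ∣ (b+1)) :
    ∃ m t : ℕ, 1 ≤ m ∧ a * m + 1 ≤ n ∧ 1 ≤ t ∧ t + 1 ≤ (a - 2) * m ∧
      n ∣ m * b + t ∧ ¬ p ∣ m := by
  have hpn : p ∣ n := hn ▸ dvd_pow_self p (by omega : μ ≠ 0)
  set g := Nat.gcd (b+1) n with hgdef
  have hgb : g ∣ (b+1) := Nat.gcd_dvd_left _ n
  have hgn : g ∣ n := Nat.gcd_dvd_right _ n
  have hpg : p ∣ g := Nat.dvd_gcd hpb1 hpn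
  have hg0 : 0 < g := Nat.gcd_pos_of_pos_left n (by omega)
  have hg7 : 7 ≤ g := le_trans hp7 (Nat.le_of_dvd hg0 hpg)
  obtain ⟨j, hjμ, hgj⟩ := (Nat.dvd_prime_pow hp).mp (hn ▸ hgn)
  have hjlt : j < μ := by
    by_contra hcon
    have hje : j = μ := by omega
    have : n ∣ (b+1) := by rw [hn, ← hje, ← hgj]; exact hgb
    have := Nat.le_of_dvd (by omega) this
    omega
  set h' := n / g with hh'def
  have hgh : g * h' = n := Nat.mul_div_cancel' hgn
  have hh'eq : h' = p ^ (μ - j) := by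
    rw [hh'def, hn, hgj, Nat.pow_div (by omega) hp.pos]
  have hph' : p ∣ h' := by
    rw [hh'eq]; exact dvd_pow_self p (by omega)
  have hh'0 : 0 < h' := by rw [hh'eq]; exact pow_pos hp.pos _
  have hh'7 : 7 ≤ h' := le_trans hp7 (Nat.le_of_dvd hh'0 hph')
  set w := (b+1) / g with hwdef
  have hbw : g * w = b+1 := Nat.mul_div_cancel' hgb
  have hco : Nat.Coprime w h' := Nat.coprime_div_gcd_div_gcd hg0
  obtain ⟨y, hy⟩ := exists_inv (by omega : 1 ≤ h') hco
  set m0 := y % h' with hm0def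
  have hm0lt : m0 < h' := Nat.mod_lt _ (by omega)
  have hineq : 5*g + 5*h' + 1 ≤ g*h' := ineq2 hg7 hh'7 (by rw [hgh]; omega)
  have hhi : (g + h') * a ≤ n - 1 := by
    have h1 : (g + h') * a ≤ (g + h') * 5 := Nat.mul_le_mul_left _ ha5
    omega
  have hap : (g + 1) + h' ≤ (n-1)/a + 1 := by
    have := (Nat.le_div_iff_mul_le (by omega : 0 < a)).mpr hhi
    omega
  obtain ⟨s, hs1, hs2⟩ := ap_mem m0 h' (g + 1) ((n-1)/a) hh'0 hm0lt hap
  set m := m0 + h' * s with hmdef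
  have hcapm : m * a ≤ n - 1 := (Nat.le_div_iff_mul_le (by omega : 0 < a)).mp hs2
  have hmam : m * a = a * m := Nat.mul_comm m a
  have c1 : m ≡ m0 [MOD h'] := by
    show m % h' = m0 % h'
    rw [hmdef]
    exact Nat.add_mul_mod_self_left m0 h' s
  have c2 : m0 ≡ y [MOD h'] := Nat.mod_modEq _ _
  have c3 : m * w ≡ 1 [MOD h'] := by
    calc m*w ≡ m0*w [MOD h'] := c1.mul_right w
    _ ≡ y*w [MOD h'] := c2.mul_right w
    _ = w*y := by ring
    _ ≡ 1 [MOD h'] := hy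
  -- m*w = h'*lam + 1
  have hge : 1 ≤ m * w := by
    have : 1 ≤ m := by omega
    have : 1 ≤ w := by
      rcases Nat.eq_zero_or_pos w with h0 | h; · exfalso; rw [h0, Nat.mul_zero] at hbw; omega
      omega
    exact Nat.one_le_iff_ne_zero.mpr (by positivity)
  have hmod1 : (m*w) % h' = 1 := by
    have := c3
    unfold Nat.ModEq at this
    rwa [Nat.mod_eq_of_lt (by omega : 1 < h')] at this
  have hlam' := Nat.div_add_mod (m*w) h'
  set lam := (m*w)/h' with hlamdef
  have hlam : h' * lam + 1 = m * w := by omega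
  have h2am : 2*m ≤ (a-2)*m := Nat.mul_le_mul_right m (by omega)
  have hkey : m * (b+1) = n * lam + g := by
    calc m * (b+1) = m * (g * w) := by rw [hbw]
    _ = g * (m * w) := by ring
    _ = g * (h' * lam + 1) := by rw [hlam]
    _ = (g * h') * lam + g := by ring
    _ = n * lam + g := by rw [hgh]
  have hexp : m * (b+1) = m * b + m := by ring
  refine ⟨m, m - g, by omega, by omega, by omega, by omega, ⟨lam, by omega⟩, ?_⟩
  · intro hpm
    have hd2 : p ∣ m*w := Dvd.dvd.mul_right hpm w
    have hd1 : p ∣ h'*lam := Dvd.dvd.mul_right hph' lam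
    have hd3 : p ∣ 1 := by
      have := Nat.dvd_sub hd2 hd1
      rw [show m*w - h'*lam = 1 by omega] at this
      exact this
    have := Nat.le_of_dvd (by norm_num) hd3
    omega

private lemma key (n a b c m t : ℕ) (ha4 : 4 ≤ a) (ha5 : a ≤ 5)
    (hcab : c = a + b - 2) (hbn : 2 * b < n) (hab : a ≤ b)
    (hm1 : 1 ≤ m) (hcap : a * m + 1 ≤ n) (ht1 : 1 ≤ t) (ht2 : t + 1 ≤ (a - 2) * m)
    (hdvd : n ∣ m * b + t) :
    lpr n m + lpr n m + lpr n (m * c) + lpr n (m * (n - b)) + lpr n (m * (n - a)) = n := by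
  obtain ⟨K, hK⟩ := hdvd
  have hma : m ≤ a * m := Nat.le_mul_of_pos_left m (by omega)
  have h2am : 2 * m ≤ (a-2) * m := Nat.mul_le_mul_right m (by omega)
  have haam : (a-2) * m + 2 * m = a * m := by
    rw [← Nat.add_mul]
    congr 1
    omega
  have hmn : m < n := by omega
  -- lpr n m
  have l1 : lpr n m = m := by
    unfold lpr
    rw [Nat.mod_eq_of_lt hmn, if_neg (by omega)]
  -- lpr n (m*c)
  have hc2 : c = (a - 2) + b := by omega
  have hmc : m * c = (a-2)*m + m*b := by rw [hc2]; ring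
  have hmceq : m * c = ((a-2)*m - t) + n * K := by omega
  have l2 : lpr n (m * c) = (a-2)*m - t := by
    unfold lpr
    rw [hmceq, Nat.add_mul_mod_self_left, Nat.mod_eq_of_lt (by omega), if_neg (by omega)]
  -- lpr n (m*(n-b))
  have hKm : K ≤ m := by
    have hmb : m * b + m ≤ n * m := by
      calc m * b + m = m * (b+1) := by ring
      _ ≤ m * n := Nat.mul_le_mul_left m (by omega)
      _ = n * m := Nat.mul_comm m n
    have hlt : n * K < n * (m+1) := by
      have e1 : n * (m+1) = n * m + n := by ring
      omega
    have := Nat.lt_of_mul_lt_mul_left hlt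
    omega
  have hnb1 : m * (n - b) + m * b = n * m := by
    rw [← Nat.mul_add]
    have : n - b + b = n := by omega
    rw [this]
    exact Nat.mul_comm m n
  have hnb2 : n * (m - K) + n * K = n * m := by
    rw [← Nat.mul_add]
    congr 1
    omega
  have hnbeq : m * (n - b) = t + n * (m - K) := by omega
  have l3 : lpr n (m * (n - b)) = t := by
    unfold lpr
    rw [hnbeq, Nat.add_mul_mod_self_left, Nat.mod_eq_of_lt (by omega), if_neg (by omega)]
  -- lpr n (m*(n-a))
  have hna1 : m * (n - a) + a * m = n * m := by
    have : m * (n - a) + m * a = m * n := by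
      rw [← Nat.mul_add]
      congr 1
      omega
    have h2 : m * a = a * m := Nat.mul_comm m a
    have h3 : m * n = n * m := Nat.mul_comm m n
    omega
  have hna2 : n * (m - 1) + n * 1 = n * m := by
    rw [← Nat.mul_add]
    congr 1
    omega
  have hnaeq : m * (n - a) = (n - a*m) + n * (m - 1) := by omega
  have l4 : lpr n (m * (n - a)) = n - a*m := by
    unfold lpr
    rw [hnaeq, Nat.add_mul_mod_self_left, Nat.mod_eq_of_lt (by omega), if_neg (by omega)]
  rw [l1, l2, l3, l4]
  omega


private lemma famI_4_2_5 (n b p : ℕ) (hp7 : 7 ≤ p) (hb : 44 ≤ b)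
    (hrel : 2*b + 5 = n) :
    ∃ m t : ℕ, 1 ≤ m ∧ 4*m + 1 ≤ n ∧ 1 ≤ t ∧ t + 1 ≤ (4-2)*m ∧
      n ∣ m*b + t ∧ ¬ p ∣ m := by
  have hQ := Nat.div_add_mod b 5
  have hQr : b % 5 < 5 := Nat.mod_lt _ (by norm_num)
  set Q := b / 5 with hQdef
  have hmain : ∀ q : ℕ, Q + 1 ≤ q → q ≤ Q + 2 → ¬ p ∣ (2*q + 1) →
      ∃ m t : ℕ, 1 ≤ m ∧ 4*m + 1 ≤ n ∧ 1 ≤ t ∧ t + 1 ≤ (4-2)*m ∧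
        n ∣ m*b + t ∧ ¬ p ∣ m := by
    intro q hq1 hq2 hpm
    have heq : b + 1 ≤ 5*q := by omega
    refine ⟨2*q + 1, 5*q - b, by omega, by omega, by omega, by omega, ⟨q, ?_⟩, hpm⟩
    have e1 : (2*q+1)*b = 2*(b*q) + b := by ring
    have e3 : 2*(b*q) + 5*q = n*q := by
      calc 2*(b*q) + 5*q = (2*b + 5)*q := by ring
      _ = n*q := by rw [hrel]
    omega
  by_cases hdp : p ∣ (2*(Q+1) + 1)
  · refine hmain (Q+2) (by omega) le_rfl ?_
    intro hc
    have h4 := Nat.dvd_sub hc hdp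
    have h5 : 2*(Q+2) + 1 - (2*(Q+1) + 1) = 2 := by omega
    rw [h5] at h4
    have := Nat.le_of_dvd (by norm_num) h4
    omega
  · exact hmain (Q+1) le_rfl (by omega) hdp

private lemma famI_4_2_7 (n b p : ℕ) (hp7 : 7 ≤ p) (hb : 44 ≤ b)
    (hrel : 2*b + 7 = n) :
    ∃ m t : ℕ, 1 ≤ m ∧ 4*m + 1 ≤ n ∧ 1 ≤ t ∧ t + 1 ≤ (4-2)*m ∧
      n ∣ m*b + t ∧ ¬ p ∣ m := by
  have hQ := Nat.div_add_mod b 7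
  have hQr : b % 7 < 7 := Nat.mod_lt _ (by norm_num)
  set Q := b / 7 with hQdef
  have hmain : ∀ q : ℕ, Q + 1 ≤ q → q ≤ Q + 2 → ¬ p ∣ (2*q + 1) →
      ∃ m t : ℕ, 1 ≤ m ∧ 4*m + 1 ≤ n ∧ 1 ≤ t ∧ t + 1 ≤ (4-2)*m ∧
        n ∣ m*b + t ∧ ¬ p ∣ m := by
    intro q hq1 hq2 hpm
    have heq : b + 1 ≤ 7*q := by omega
    refine ⟨2*q + 1, 7*q - b, by omega, by omega, by omega, by omega, ⟨q, ?_⟩, hpm⟩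
    have e1 : (2*q+1)*b = 2*(b*q) + b := by ring
    have e3 : 2*(b*q) + 7*q = n*q := by
      calc 2*(b*q) + 7*q = (2*b + 7)*q := by ring
      _ = n*q := by rw [hrel]
    omega
  by_cases hdp : p ∣ (2*(Q+1) + 1)
  · refine hmain (Q+2) (by omega) le_rfl ?_
    intro hc
    have h4 := Nat.dvd_sub hc hdp
    have h5 : 2*(Q+2) + 1 - (2*(Q+1) + 1) = 2 := by omega
    rw [h5] at h4
    have := Nat.le_of_dvd (by norm_num) h4
    omega
  · exact hmain (Q+1) le_rfl (by omega) hdp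

private lemma famI_4_3_7 (n b p : ℕ) (hp7 : 7 ≤ p) (hb : 44 ≤ b)
    (hrel : 3*b + 7 = n) :
    ∃ m t : ℕ, 1 ≤ m ∧ 4*m + 1 ≤ n ∧ 1 ≤ t ∧ t + 1 ≤ (4-2)*m ∧
      n ∣ m*b + t ∧ ¬ p ∣ m := by
  have hQ := Nat.div_add_mod b 7
  have hQr : b % 7 < 7 := Nat.mod_lt _ (by norm_num)
  set Q := b / 7 with hQdef
  have hmain : ∀ q : ℕ, Q + 1 ≤ q → q ≤ Q + 2 → ¬ p ∣ (3*q + 1) →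
      ∃ m t : ℕ, 1 ≤ m ∧ 4*m + 1 ≤ n ∧ 1 ≤ t ∧ t + 1 ≤ (4-2)*m ∧
        n ∣ m*b + t ∧ ¬ p ∣ m := by
    intro q hq1 hq2 hpm
    have heq : b + 1 ≤ 7*q := by omega
    refine ⟨3*q + 1, 7*q - b, by omega, by omega, by omega, by omega, ⟨q, ?_⟩, hpm⟩
    have e1 : (3*q+1)*b = 3*(b*q) + b := by ring
    have e3 : 3*(b*q) + 7*q = n*q := by
      calc 3*(b*q) + 7*q = (3*b + 7)*q := by ring
      _ = n*q := by rw [hrel]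
    omega
  by_cases hdp : p ∣ (3*(Q+1) + 1)
  · refine hmain (Q+2) (by omega) le_rfl ?_
    intro hc
    have h4 := Nat.dvd_sub hc hdp
    have h5 : 3*(Q+2) + 1 - (3*(Q+1) + 1) = 3 := by omega
    rw [h5] at h4
    have := Nat.le_of_dvd (by norm_num) h4
    omega
  · exact hmain (Q+1) le_rfl (by omega) hdp

private lemma famI_4_3_8 (n b p : ℕ) (hp7 : 7 ≤ p) (hb : 44 ≤ b)
    (hrel : 3*b + 8 = n) :
    ∃ m t : ℕ, 1 ≤ m ∧ 4*m + 1 ≤ n ∧ 1 ≤ t ∧ t + 1 ≤ (4-2)*m ∧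
      n ∣ m*b + t ∧ ¬ p ∣ m := by
  have hQ := Nat.div_add_mod b 8
  have hQr : b % 8 < 8 := Nat.mod_lt _ (by norm_num)
  set Q := b / 8 with hQdef
  have hmain : ∀ q : ℕ, Q + 1 ≤ q → q ≤ Q + 2 → ¬ p ∣ (3*q + 1) →
      ∃ m t : ℕ, 1 ≤ m ∧ 4*m + 1 ≤ n ∧ 1 ≤ t ∧ t + 1 ≤ (4-2)*m ∧
        n ∣ m*b + t ∧ ¬ p ∣ m := by
    intro q hq1 hq2 hpm
    have heq : b + 1 ≤ 8*q := by omega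
    refine ⟨3*q + 1, 8*q - b, by omega, by omega, by omega, by omega, ⟨q, ?_⟩, hpm⟩
    have e1 : (3*q+1)*b = 3*(b*q) + b := by ring
    have e3 : 3*(b*q) + 8*q = n*q := by
      calc 3*(b*q) + 8*q = (3*b + 8)*q := by ring
      _ = n*q := by rw [hrel]
    omega
  by_cases hdp : p ∣ (3*(Q+1) + 1)
  · refine hmain (Q+2) (by omega) le_rfl ?_
    intro hc
    have h4 := Nat.dvd_sub hc hdp
    have h5 : 3*(Q+2) + 1 - (3*(Q+1) + 1) = 3 := by omega
    rw [h5] at h4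
    have := Nat.le_of_dvd (by norm_num) h4
    omega
  · exact hmain (Q+1) le_rfl (by omega) hdp

private lemma famI_4_4_9 (n b p : ℕ) (hp7 : 7 ≤ p) (hb : 44 ≤ b)
    (hrel : 4*b + 9 = n) :
    ∃ m t : ℕ, 1 ≤ m ∧ 4*m + 1 ≤ n ∧ 1 ≤ t ∧ t + 1 ≤ (4-2)*m ∧
      n ∣ m*b + t ∧ ¬ p ∣ m := by
  have hQ := Nat.div_add_mod b 9
  have hQr : b % 9 < 9 := Nat.mod_lt _ (by norm_num)
  set Q := b / 9 with hQdef
  have hmain : ∀ q : ℕ, Q + 1 ≤ q → q ≤ Q + 2 → ¬ p ∣ (4*q + 1) →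
      ∃ m t : ℕ, 1 ≤ m ∧ 4*m + 1 ≤ n ∧ 1 ≤ t ∧ t + 1 ≤ (4-2)*m ∧
        n ∣ m*b + t ∧ ¬ p ∣ m := by
    intro q hq1 hq2 hpm
    have heq : b + 1 ≤ 9*q := by omega
    refine ⟨4*q + 1, 9*q - b, by omega, by omega, by omega, by omega, ⟨q, ?_⟩, hpm⟩
    have e1 : (4*q+1)*b = 4*(b*q) + b := by ring
    have e3 : 4*(b*q) + 9*q = n*q := by
      calc 4*(b*q) + 9*q = (4*b + 9)*q := by ring
      _ = n*q := by rw [hrel]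
    omega
  by_cases hdp : p ∣ (4*(Q+1) + 1)
  · refine hmain (Q+2) (by omega) le_rfl ?_
    intro hc
    have h4 := Nat.dvd_sub hc hdp
    have h5 : 4*(Q+2) + 1 - (4*(Q+1) + 1) = 4 := by omega
    rw [h5] at h4
    have := Nat.le_of_dvd (by norm_num) h4
    omega
  · exact hmain (Q+1) le_rfl (by omega) hdp

private lemma famI_5_2_7 (n b p : ℕ) (hp7 : 7 ≤ p) (hb : 55 ≤ b)
    (hrel : 2*b + 7 = n) :
    ∃ m t : ℕ, 1 ≤ m ∧ 5*m + 1 ≤ n ∧ 1 ≤ t ∧ t + 1 ≤ (5-2)*m ∧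
      n ∣ m*b + t ∧ ¬ p ∣ m := by
  have hQ := Nat.div_add_mod b 7
  have hQr : b % 7 < 7 := Nat.mod_lt _ (by norm_num)
  set Q := b / 7 with hQdef
  have hmain : ∀ q : ℕ, Q + 1 ≤ q → q ≤ Q + 2 → ¬ p ∣ (2*q + 1) →
      ∃ m t : ℕ, 1 ≤ m ∧ 5*m + 1 ≤ n ∧ 1 ≤ t ∧ t + 1 ≤ (5-2)*m ∧
        n ∣ m*b + t ∧ ¬ p ∣ m := by
    intro q hq1 hq2 hpm
    have heq : b + 1 ≤ 7*q := by omega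
    refine ⟨2*q + 1, 7*q - b, by omega, by omega, by omega, by omega, ⟨q, ?_⟩, hpm⟩
    have e1 : (2*q+1)*b = 2*(b*q) + b := by ring
    have e3 : 2*(b*q) + 7*q = n*q := by
      calc 2*(b*q) + 7*q = (2*b + 7)*q := by ring
      _ = n*q := by rw [hrel]
    omega
  by_cases hdp : p ∣ (2*(Q+1) + 1)
  · refine hmain (Q+2) (by omega) le_rfl ?_
    intro hc
    have h4 := Nat.dvd_sub hc hdp
    have h5 : 2*(Q+2) + 1 - (2*(Q+1) + 1) = 2 := by omega
    rw [h5] at h4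
    have := Nat.le_of_dvd (by norm_num) h4
    omega
  · exact hmain (Q+1) le_rfl (by omega) hdp

private lemma famII_4_3_1 (n b p : ℕ) (hp7 : 7 ≤ p) (hb : 44 ≤ b)
    (hrel : 3*b = n + 1) :
    ∃ m t : ℕ, 1 ≤ m ∧ 4*m + 1 ≤ n ∧ 1 ≤ t ∧ t + 1 ≤ (4-2)*m ∧
      n ∣ m*b + t ∧ ¬ p ∣ m := by
  have hQ := Nat.div_add_mod b 7
  have hQr : b % 7 < 7 := Nat.mod_lt _ (by norm_num)
  set Q := b / 7 with hQdef
  have hmain : ∀ q : ℕ, Q + 1 ≤ q → q ≤ Q + 2 → ¬ p ∣ (3*q + 2) →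
      ∃ m t : ℕ, 1 ≤ m ∧ 4*m + 1 ≤ n ∧ 1 ≤ t ∧ t + 1 ≤ (4-2)*m ∧
        n ∣ m*b + t ∧ ¬ p ∣ m := by
    intro q hq1 hq2 hpm
    have hb1 : 1*(q+1) + 1 ≤ b := by omega
    refine ⟨3*q + 2, b - 1*(q+1), by omega, by omega, by omega, by omega,
      ⟨q+1, ?_⟩, hpm⟩
    have e1 : (3*q + 2)*b = 3*(b*q) + 2*b := by ring
    have e3 : 3*(b*q) = n*q + 1*q := by
      calc 3*(b*q) = (3*b)*q := by ring
      _ = (n + 1)*q := by rw [hrel]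
      _ = n*q + 1*q := by ring
    have e2 : n*(q+1) = n*q + n := by ring
    omega
  by_cases hdp : p ∣ (3*(Q+1) + 2)
  · refine hmain (Q+2) (by omega) le_rfl ?_
    intro hc
    have h4 := Nat.dvd_sub hc hdp
    have h5 : 3*(Q+2) + 2 - (3*(Q+1) + 2) = 3 := by omega
    rw [h5] at h4
    have := Nat.le_of_dvd (by norm_num) h4
    omega
  · exact hmain (Q+1) le_rfl (by omega) hdp

private lemma famII_4_3_2 (n b p : ℕ) (hp7 : 7 ≤ p) (hb : 44 ≤ b)
    (hrel : 3*b = n + 2) :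
    ∃ m t : ℕ, 1 ≤ m ∧ 4*m + 1 ≤ n ∧ 1 ≤ t ∧ t + 1 ≤ (4-2)*m ∧
      n ∣ m*b + t ∧ ¬ p ∣ m := by
  have hQ := Nat.div_add_mod b 8
  have hQr : b % 8 < 8 := Nat.mod_lt _ (by norm_num)
  set Q := b / 8 with hQdef
  have hmain : ∀ q : ℕ, Q + 1 ≤ q → q ≤ Q + 2 → ¬ p ∣ (3*q + 2) →
      ∃ m t : ℕ, 1 ≤ m ∧ 4*m + 1 ≤ n ∧ 1 ≤ t ∧ t + 1 ≤ (4-2)*m ∧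
        n ∣ m*b + t ∧ ¬ p ∣ m := by
    intro q hq1 hq2 hpm
    have hb1 : 2*(q+1) + 1 ≤ b := by omega
    refine ⟨3*q + 2, b - 2*(q+1), by omega, by omega, by omega, by omega,
      ⟨q+1, ?_⟩, hpm⟩
    have e1 : (3*q + 2)*b = 3*(b*q) + 2*b := by ring
    have e3 : 3*(b*q) = n*q + 2*q := by
      calc 3*(b*q) = (3*b)*q := by ring
      _ = (n + 2)*q := by rw [hrel]
      _ = n*q + 2*q := by ring
    have e2 : n*(q+1) = n*q + n := by ring
    omega
  by_cases hdp : p ∣ (3*(Q+1) + 2)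
  · refine hmain (Q+2) (by omega) le_rfl ?_
    intro hc
    have h4 := Nat.dvd_sub hc hdp
    have h5 : 3*(Q+2) + 2 - (3*(Q+1) + 2) = 3 := by omega
    rw [h5] at h4
    have := Nat.le_of_dvd (by norm_num) h4
    omega
  · exact hmain (Q+1) le_rfl (by omega) hdp

private lemma famII_4_4_1 (n b p : ℕ) (hp7 : 7 ≤ p) (hb : 44 ≤ b)
    (hrel : 4*b = n + 1) :
    ∃ m t : ℕ, 1 ≤ m ∧ 4*m + 1 ≤ n ∧ 1 ≤ t ∧ t + 1 ≤ (4-2)*m ∧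
      n ∣ m*b + t ∧ ¬ p ∣ m := by
  have hQ := Nat.div_add_mod b 9
  have hQr : b % 9 < 9 := Nat.mod_lt _ (by norm_num)
  set Q := b / 9 with hQdef
  have hmain : ∀ q : ℕ, Q + 1 ≤ q → q ≤ Q + 2 → ¬ p ∣ (4*q + 3) →
      ∃ m t : ℕ, 1 ≤ m ∧ 4*m + 1 ≤ n ∧ 1 ≤ t ∧ t + 1 ≤ (4-2)*m ∧
        n ∣ m*b + t ∧ ¬ p ∣ m := by
    intro q hq1 hq2 hpm
    have hb1 : 1*(q+1) + 1 ≤ b := by omega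
    refine ⟨4*q + 3, b - 1*(q+1), by omega, by omega, by omega, by omega,
      ⟨q+1, ?_⟩, hpm⟩
    have e1 : (4*q + 3)*b = 4*(b*q) + 3*b := by ring
    have e3 : 4*(b*q) = n*q + 1*q := by
      calc 4*(b*q) = (4*b)*q := by ring
      _ = (n + 1)*q := by rw [hrel]
      _ = n*q + 1*q := by ring
    have e2 : n*(q+1) = n*q + n := by ring
    omega
  by_cases hdp : p ∣ (4*(Q+1) + 3)
  · refine hmain (Q+2) (by omega) le_rfl ?_
    intro hc
    have h4 := Nat.dvd_sub hc hdp
    have h5 : 4*(Q+2) + 3 - (4*(Q+1) + 3) = 4 := by omega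
    rw [h5] at h4
    have := Nat.le_of_dvd (by norm_num) h4
    omega
  · exact hmain (Q+1) le_rfl (by omega) hdp

private lemma famII_5_3_1 (n b p : ℕ) (hp7 : 7 ≤ p) (hb : 55 ≤ b)
    (hrel : 3*b = n + 1) :
    ∃ m t : ℕ, 1 ≤ m ∧ 5*m + 1 ≤ n ∧ 1 ≤ t ∧ t + 1 ≤ (5-2)*m ∧
      n ∣ m*b + t ∧ ¬ p ∣ m := by
  have hQ := Nat.div_add_mod b 10
  have hQr : b % 10 < 10 := Nat.mod_lt _ (by norm_num)
  set Q := b / 10 with hQdef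
  have hmain : ∀ q : ℕ, Q + 1 ≤ q → q ≤ Q + 2 → ¬ p ∣ (3*q + 2) →
      ∃ m t : ℕ, 1 ≤ m ∧ 5*m + 1 ≤ n ∧ 1 ≤ t ∧ t + 1 ≤ (5-2)*m ∧
        n ∣ m*b + t ∧ ¬ p ∣ m := by
    intro q hq1 hq2 hpm
    have hb1 : 1*(q+1) + 1 ≤ b := by omega
    refine ⟨3*q + 2, b - 1*(q+1), by omega, by omega, by omega, by omega,
      ⟨q+1, ?_⟩, hpm⟩
    have e1 : (3*q + 2)*b = 3*(b*q) + 2*b := by ring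
    have e3 : 3*(b*q) = n*q + 1*q := by
      calc 3*(b*q) = (3*b)*q := by ring
      _ = (n + 1)*q := by rw [hrel]
      _ = n*q + 1*q := by ring
    have e2 : n*(q+1) = n*q + n := by ring
    omega
  by_cases hdp : p ∣ (3*(Q+1) + 2)
  · refine hmain (Q+2) (by omega) le_rfl ?_
    intro hc
    have h4 := Nat.dvd_sub hc hdp
    have h5 : 3*(Q+2) + 2 - (3*(Q+1) + 2) = 3 := by omega
    rw [h5] at h4
    have := Nat.le_of_dvd (by norm_num) h4
    omega
  · exact hmain (Q+1) le_rfl (by omega) hdp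

private lemma famII_5_3_2 (n b p : ℕ) (hp7 : 7 ≤ p) (hb : 55 ≤ b)
    (hrel : 3*b = n + 2) :
    ∃ m t : ℕ, 1 ≤ m ∧ 5*m + 1 ≤ n ∧ 1 ≤ t ∧ t + 1 ≤ (5-2)*m ∧
      n ∣ m*b + t ∧ ¬ p ∣ m := by
  have hQ := Nat.div_add_mod b 11
  have hQr : b % 11 < 11 := Nat.mod_lt _ (by norm_num)
  set Q := b / 11 with hQdef
  have hmain : ∀ q : ℕ, Q + 1 ≤ q → q ≤ Q + 2 → ¬ p ∣ (3*q + 2) →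
      ∃ m t : ℕ, 1 ≤ m ∧ 5*m + 1 ≤ n ∧ 1 ≤ t ∧ t + 1 ≤ (5-2)*m ∧
        n ∣ m*b + t ∧ ¬ p ∣ m := by
    intro q hq1 hq2 hpm
    have hb1 : 2*(q+1) + 1 ≤ b := by omega
    refine ⟨3*q + 2, b - 2*(q+1), by omega, by omega, by omega, by omega,
      ⟨q+1, ?_⟩, hpm⟩
    have e1 : (3*q + 2)*b = 3*(b*q) + 2*b := by ring
    have e3 : 3*(b*q) = n*q + 2*q := by
      calc 3*(b*q) = (3*b)*q := by ring
      _ = (n + 2)*q := by rw [hrel]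
      _ = n*q + 2*q := by ring
    have e2 : n*(q+1) = n*q + n := by ring
    omega
  by_cases hdp : p ∣ (3*(Q+1) + 2)
  · refine hmain (Q+2) (by omega) le_rfl ?_
    intro hc
    have h4 := Nat.dvd_sub hc hdp
    have h5 : 3*(Q+2) + 2 - (3*(Q+1) + 2) = 3 := by omega
    rw [h5] at h4
    have := Nat.le_of_dvd (by norm_num) h4
    omega
  · exact hmain (Q+1) le_rfl (by omega) hdp

private lemma famII_5_4_1 (n b p : ℕ) (hp7 : 7 ≤ p) (hb : 55 ≤ b)
    (hrel : 4*b = n + 1) :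
    ∃ m t : ℕ, 1 ≤ m ∧ 5*m + 1 ≤ n ∧ 1 ≤ t ∧ t + 1 ≤ (5-2)*m ∧
      n ∣ m*b + t ∧ ¬ p ∣ m := by
  have hQ := Nat.div_add_mod b 13
  have hQr : b % 13 < 13 := Nat.mod_lt _ (by norm_num)
  set Q := b / 13 with hQdef
  have hmain : ∀ q : ℕ, Q + 1 ≤ q → q ≤ Q + 2 → ¬ p ∣ (4*q + 3) →
      ∃ m t : ℕ, 1 ≤ m ∧ 5*m + 1 ≤ n ∧ 1 ≤ t ∧ t + 1 ≤ (5-2)*m ∧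
        n ∣ m*b + t ∧ ¬ p ∣ m := by
    intro q hq1 hq2 hpm
    have hb1 : 1*(q+1) + 1 ≤ b := by omega
    refine ⟨4*q + 3, b - 1*(q+1), by omega, by omega, by omega, by omega,
      ⟨q+1, ?_⟩, hpm⟩
    have e1 : (4*q + 3)*b = 4*(b*q) + 3*b := by ring
    have e3 : 4*(b*q) = n*q + 1*q := by
      calc 4*(b*q) = (4*b)*q := by ring
      _ = (n + 1)*q := by rw [hrel]
      _ = n*q + 1*q := by ring
    have e2 : n*(q+1) = n*q + n := by ring
    omega
  by_cases hdp : p ∣ (4*(Q+1) + 3)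
  · refine hmain (Q+2) (by omega) le_rfl ?_
    intro hc
    have h4 := Nat.dvd_sub hc hdp
    have h5 : 4*(Q+2) + 3 - (4*(Q+1) + 3) = 4 := by omega
    rw [h5] at h4
    have := Nat.le_of_dvd (by norm_num) h4
    omega
  · exact hmain (Q+1) le_rfl (by omega) hdp


-- Case p ∤ b, p ∤ b+1 : pigeonhole
private lemma caseB2 (p μ n a b : ℕ) (hp : p.Prime) (hp7 : 7 ≤ p) (hμ : 2 ≤ μ)
    (hn : n = p ^ μ) (hn289 : 289 ≤ n) (ha : a = 4 ∨ a = 5)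
    (hb : 11 * a ≤ b) (hbn : 2*b + 5 ≤ n)
    (h2n : ¬ 2 ∣ n) (h3n : ¬ 3 ∣ n) (h5n : ¬ 5 ∣ n)
    (hpb : ¬ p ∣ b) (hpb1 : ¬ p ∣ (b+1)) :
    ∃ m t : ℕ, 1 ≤ m ∧ a * m + 1 ≤ n ∧ 1 ≤ t ∧ t + 1 ≤ (a - 2) * m ∧
      n ∣ m * b + t ∧ ¬ p ∣ m := by
  have ha4 : 4 ≤ a := by rcases ha with rfl|rfl <;> omega
  have ha5 : a ≤ 5 := by rcases ha with rfl|rfl <;> omega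
  have hb44 : 44 ≤ b := by omega
  have hn0 : 0 < n := by omega
  have hpn : p ∣ n := hn ▸ dvd_pow_self p (by omega : μ ≠ 0)
  set A := (n-1)/a with hAdef
  have hA5 : (n-1)/5 ≤ A := Nat.div_le_div_left ha5 (by omega)
  have hAn : A ≤ n - 1 := Nat.div_le_self _ _
  have hAcap : A * a ≤ n - 1 := (Nat.le_div_iff_mul_le (by omega : 0 < a)).mp le_rfl
  -- pigeonhole
  have hmaps : ∀ x ∈ Finset.range (A+1),
      (x*(b+1)) % n / 6 ∈ Finset.range (n/6 + 1) := by
    intro x _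
    simp only [Finset.mem_range]
    have := Nat.mod_lt (x*(b+1)) hn0
    omega
  have hcard : (Finset.range (n/6+1)).card < (Finset.range (A+1)).card := by
    simp only [Finset.card_range]
    omega
  obtain ⟨i, hi, j, hj, hij, hfeq⟩ :=
    Finset.exists_ne_map_eq_of_card_lt_of_maps_to hcard hmaps
  simp only [Finset.mem_range] at hi hj
  have main : ∀ i j : ℕ, i < j → j < A + 1 →
      (i*(b+1)) % n / 6 = (j*(b+1)) % n / 6 →
      ∃ m t : ℕ, 1 ≤ m ∧ a * m + 1 ≤ n ∧ 1 ≤ t ∧ t + 1 ≤ (a - 2) * m ∧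
        n ∣ m * b + t ∧ ¬ p ∣ m := by
    clear hij hfeq hi hj
    intro i j hlt hjA hfe
    set m1 := j - i with hm1def
    have hm11 : 1 ≤ m1 := by omega
    have hm1A : m1 ≤ A := by omega
    have hm1cap : m1 * a ≤ n - 1 :=
      le_trans (Nat.mul_le_mul_right a hm1A) hAcap
    have hmam : m1 * a = a * m1 := Nat.mul_comm m1 a
    have h2am : 2*m1 ≤ (a-2)*m1 := Nat.mul_le_mul_right m1 (by omega)
    set vi := (i*(b+1)) % n with hvidef
    set vj := (j*(b+1)) % n with hvjdef
    set s := (m1*(b+1)) % n with hsdef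
    have hvin : vi < n := Nat.mod_lt _ hn0
    have hvjn : vj < n := Nat.mod_lt _ hn0
    have hsn : s < n := Nat.mod_lt _ hn0
    have hvv : vj = (vi + s) % n := by
      have hj' : j = i + m1 := by omega
      have e1 : j*(b+1) = i*(b+1) + m1*(b+1) := by rw [hj']; ring
      rw [hvjdef, e1, Nat.add_mod, ← hvidef, ← hsdef]
    have hbox : vj < vi + 6 ∧ vi < vj + 6 := by omega
    -- decomposition of m1*(b+1)
    obtain ⟨q1, hq⟩ : ∃ q, n * q + s = m1*(b+1) := ⟨_, Nat.div_add_mod _ _⟩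
    clear_value s vi vj
    have hexp : m1*(b+1) = m1*b + m1 := by ring
    have hub5 : m1*(b+1) ≤ 5*(b+1) ∨ 6 ≤ m1 := by
      rcases le_or_gt m1 5 with h|h
      · exact Or.inl (Nat.mul_le_mul_right _ h)
      · exact Or.inr h
    have hlb : b+1 ≤ m1*(b+1) := Nat.le_mul_of_pos_left _ (by omega)
    rcases Nat.lt_or_ge (vi + s) n with hcase | hcase
    · -- LOW : s ≤ 5
      have hs5 : s ≤ 5 := by
        rw [Nat.mod_eq_of_lt hcase] at hvv
        omega
      have he1 : 1 ≤ s := by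
        rcases Nat.eq_zero_or_pos s with h0 | h
        swap
        · exact h
        exfalso
        have hdvd : n ∣ m1*(b+1) := ⟨q1, by omega⟩
        have hcp : Nat.Coprime p (b+1) := (hp.coprime_iff_not_dvd).mpr hpb1
        have hcop : Nat.Coprime n (b+1) := by
          rw [hn]; exact Nat.Coprime.pow_left μ hcp
        have h4 := Nat.Coprime.dvd_of_dvd_mul_right hcop hdvd
        have := Nat.le_of_dvd (by omega) h4
        omega
      by_cases hsucc : s + 1 ≤ m1
      · refine ⟨m1, m1 - s, by omega, by omega, by omega, by omega, ⟨q1, by omega⟩, ?_⟩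
        intro hpm
        have h1 : p ∣ m1*(b+1) := Dvd.dvd.mul_right hpm _
        have h2 : p ∣ n*q1 := Dvd.dvd.mul_right hpn q1
        have h3 : p ∣ s := by
          have := Nat.dvd_sub h1 h2
          rwa [show m1*(b+1) - n*q1 = s by omega] at this
        have := Nat.le_of_dvd (by omega) h3
        omega
      · -- families, LOW
        have hm1s : m1 ≤ s := by omega
        have hm15 : m1 ≤ 5 := by omega
        have hub : m1*(b+1) ≤ 5*(b+1) := by
          rcases hub5 with h|h
          · exact h
          · omega
        have hq12 : q1 ≤ 2 := by
          by_contra hq3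
          have h3 : n*3 ≤ n*q1 := Nat.mul_le_mul_left n (by omega)
          omega
        have hq1eq : q1 = 1 := by
          rcases Nat.lt_or_ge q1 2 with h|h
          · have : 1 ≤ q1 := by
              by_contra h0
              have hz : q1 = 0 := by omega
              rw [hz] at hq
              omega
            omega
          · exfalso
            have hq2e : q1 = 2 := by omega
            rw [hq2e] at hq
            rcases Nat.lt_or_ge m1 5 with h4 | h5
            · have hub4 : m1*(b+1) ≤ 4*(b+1) := Nat.mul_le_mul_right _ (by omega)
              omega
            · have hm5 : m1 = 5 := by omega
              have hs5' : s = 5 := by omega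
              rw [hm5, hs5'] at hq
              have h5d : (5:ℕ) ∣ 2*n := ⟨b, by omega⟩
              rcases (Nat.Prime.dvd_mul (by norm_num)).mp h5d with h|h
              · omega
              · have h5p : (5:ℕ) ∣ p := Nat.Prime.dvd_of_dvd_pow (by norm_num) (hn ▸ h)
                have := (Nat.prime_dvd_prime_iff_eq (by norm_num) hp).mp h5p
                omega
        rw [hq1eq] at hq
        simp only [Nat.mul_one] at hq
        -- n + s = m1*(b+1)
        have hm13 : 3 ≤ m1 := by
          by_contra hcon
          have : m1*(b+1) ≤ 2*(b+1) := Nat.mul_le_mul_right _ (by omega)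
          omega
        interval_cases m1
        · -- m1 = 3
          interval_cases s
          · exact absurd ⟨b, by omega⟩ h3n
          · rcases ha with rfl | rfl
            · exact famII_4_3_1 n b p hp7 (by omega) (by omega)
            · exact famII_5_3_1 n b p hp7 (by omega) (by omega)
          · rcases ha with rfl | rfl
            · exact famII_4_3_2 n b p hp7 (by omega) (by omega)
            · exact famII_5_3_2 n b p hp7 (by omega) (by omega)
        · -- m1 = 4
          interval_cases s
          · exact absurd ⟨2*b, by omega⟩ h2n
          · rcases ha with rfl | rfl
            · exact famII_4_4_1 n b p hp7 (by omega) (by omega)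
            · exact famII_5_4_1 n b p hp7 (by omega) (by omega)
        · -- m1 = 5
          interval_cases s
          · exact absurd ⟨b, by omega⟩ h5n
    · -- HIGH : s ≥ n - 5
      have hvj' : vj = vi + s - n := by
        rw [Nat.mod_eq_sub_mod hcase, Nat.mod_eq_of_lt (by omega)] at hvv
        omega
      have hsh : n ≤ s + 5 := by omega
      set e := n - s with hedef
      have he1 : 1 ≤ e := by omega
      have he5 : e ≤ 5 := by omega
      have hrel' : m1*(b+1) + e = n*(q1+1) := by
        have : n*(q1+1) = n*q1 + n := by ring
        omega
      by_cases hsucc : m1 + e + 1 ≤ (a-2)*m1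
      · refine ⟨m1, m1 + e, by omega, by omega, by omega, by omega,
          ⟨q1+1, by omega⟩, ?_⟩
        intro hpm
        have h1 : p ∣ m1*(b+1) := Dvd.dvd.mul_right hpm _
        have h2 : p ∣ n*(q1+1) := Dvd.dvd.mul_right hpn _
        have h3 : p ∣ e := by
          have := Nat.dvd_sub h2 h1
          rwa [show n*(q1+1) - m1*(b+1) = e by omega] at this
        have := Nat.le_of_dvd (by omega) h3
        omega
      · -- families, HIGH
        have hbad : (a-2)*m1 ≤ m1 + e := by omega
        have hm15 : m1 ≤ 5 := by omega
        have hub : m1*(b+1) ≤ 5*(b+1) := by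
          rcases hub5 with h|h
          · exact h
          · omega
        have hk1 : q1 = 0 := by
          by_contra hcon
          have hq11 : 1 ≤ q1 := by omega
          have hq1eq : q1 = 1 := by
            by_contra hcon2
            have h3 : n*3 ≤ n*(q1+1) := Nat.mul_le_mul_left n (by omega)
            omega
          rw [hq1eq] at hrel'
          rcases Nat.lt_or_ge m1 5 with h4 | h5
          · have hub4 : m1*(b+1) ≤ 4*(b+1) := Nat.mul_le_mul_right _ (by omega)
            omega
          · have hm5 : m1 = 5 := by omega
            have he5' : e = 5 := by omega
            rw [hm5, he5'] at hrel'
            have h5d : (5:ℕ) ∣ 2*n := ⟨b+2, by omega⟩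
            rcases (Nat.Prime.dvd_mul (by norm_num)).mp h5d with h|h
            · omega
            · have h5p : (5:ℕ) ∣ p := Nat.Prime.dvd_of_dvd_pow (by norm_num) (hn ▸ h)
              have := (Nat.prime_dvd_prime_iff_eq (by norm_num) hp).mp h5p
              omega
        rw [hk1] at hrel'
        norm_num at hrel'
        -- m1*(b+1) + e = n
        have hm12 : 2 ≤ m1 := by
          by_contra hcon
          have hm1e : m1 = 1 := by omega
          rw [hm1e] at hrel'
          omega
        rcases ha with rfl | rfl
        · -- a = 4 : m1 ≤ e
          have hm1e : m1 ≤ e := by omega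
          interval_cases m1
          · interval_cases e
            · exact absurd ⟨b+2, by omega⟩ h2n
            · exact famI_4_2_5 n b p hp7 (by omega) (by omega)
            · exact absurd ⟨b+3, by omega⟩ h2n
            · exact famI_4_2_7 n b p hp7 (by omega) (by omega)
          · interval_cases e
            · exact absurd ⟨b+2, by omega⟩ h3n
            · exact famI_4_3_7 n b p hp7 (by omega) (by omega)
            · exact famI_4_3_8 n b p hp7 (by omega) (by omega)
          · interval_cases e
            · exact absurd ⟨2*b+4, by omega⟩ h2n
            · exact famI_4_4_9 n b p hp7 (by omega) (by omega)
          · interval_cases e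
            · exact absurd ⟨b+2, by omega⟩ h5n
        · -- a = 5 : 2*m1 ≤ e
          have hm1e : 2*m1 ≤ e := by omega
          have hm1eq : m1 = 2 := by omega
          rw [hm1eq] at hrel'
          have h45 : e = 4 ∨ e = 5 := by omega
          rcases h45 with he|he
          · exact absurd ⟨b+3, by omega⟩ h2n
          · rw [he] at hrel'
            exact famI_5_2_7 n b p hp7 (by omega) (by omega)
  rcases hij.lt_or_gt with h|h
  · exact main i j h hj hfeq
  · exact main j i h hi hfeq.symm


private lemma master (p μ n a b : ℕ) (hp : p.Prime) (hp7 : 7 ≤ p) (hμ : 2 ≤ μ)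
    (hn : n = p ^ μ) (hn289 : 289 ≤ n) (ha : a = 4 ∨ a = 5) (hb : 11 * a ≤ b)
    (hcb : 2 * a + 2 * b ≤ n + 3) :
    ∃ m t : ℕ, 1 ≤ m ∧ a * m + 1 ≤ n ∧ 1 ≤ t ∧ t + 1 ≤ (a - 2) * m ∧
      n ∣ m * b + t ∧ ¬ p ∣ m := by
  have ha4 : 4 ≤ a := by rcases ha with rfl|rfl <;> omega
  have ha5 : a ≤ 5 := by rcases ha with rfl|rfl <;> omega
  have hb44 : 44 ≤ b := by omega
  have hbn : 2*b + 5 ≤ n := by omega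
  have h2n : ¬ 2 ∣ n := by
    intro h
    have h2 : (2:ℕ) ∣ p := Nat.Prime.dvd_of_dvd_pow Nat.prime_two (hn ▸ h)
    have := (Nat.prime_dvd_prime_iff_eq Nat.prime_two hp).mp h2
    omega
  have h3n : ¬ 3 ∣ n := by
    intro h
    have h2 : (3:ℕ) ∣ p := Nat.Prime.dvd_of_dvd_pow Nat.prime_three (hn ▸ h)
    have := (Nat.prime_dvd_prime_iff_eq Nat.prime_three hp).mp h2
    omega
  have h5n : ¬ 5 ∣ n := by
    intro h
    have h2 : (5:ℕ) ∣ p := Nat.Prime.dvd_of_dvd_pow (by norm_num) (hn ▸ h)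
    have := (Nat.prime_dvd_prime_iff_eq (by norm_num) hp).mp h2
    omega
  by_cases hpb : p ∣ b
  · exact caseB0 p μ n a b hp hp7 hμ hn hn289 ha4 ha5 hb44 hbn hpb
  by_cases hpb1 : p ∣ (b+1)
  · exact caseB1 p μ n a b hp hp7 hμ hn hn289 ha4 ha5 hb44 hbn hpb1
  · exact caseB2 p μ n a b hp hp7 hμ hn hn289 ha hb hbn h2n h3n h5n hpb hpb1

theorem stmt_9 (p μ n a b c : ℕ) (hp : p.Prime) (hp7 : 7 ≤ p) (hμ : 2 ≤ μ)
    (hn : n = p ^ μ) (hn289 : 289 ≤ n)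
    (ha : a = 4 ∨ a = 5) (hab : a ≤ b) (hbc : b < c) (hc : 2 * c < n)
    (hcab : c = a + b - 2) (hs : 11 ≤ b / a)
    (hzs : n ∣ ∑ i, (![1, 1, c, n - b, n - a] : Fin 5 → ℕ) i)
    (hmin : ∀ s : Finset (Fin 5), s.Nonempty → s ≠ Finset.univ →
      ¬ n ∣ ∑ i ∈ s, (![1, 1, c, n - b, n - a] : Fin 5 → ℕ) i) :
    ∃ m : ℕ, Nat.gcd m n = 1 ∧
      lpr n m + lpr n m + lpr n (m * c) + lpr n (m * (n - b)) +
        lpr n (m * (n - a)) = n := by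
  have ha4 : 4 ≤ a := by rcases ha with rfl|rfl <;> omega
  have ha5 : a ≤ 5 := by rcases ha with rfl|rfl <;> omega
  have hb11 : 11 * a ≤ b := by
    have h1 : 11 * a ≤ (b/a) * a := Nat.mul_le_mul_right a hs
    have h2 : (b/a) * a ≤ b := Nat.div_mul_le_self b a
    omega
  have hcb : 2 * a + 2 * b ≤ n + 3 := by omega
  obtain ⟨m, t, hm1, hcap, ht1, ht2, hdvd, hpm⟩ :=
    master p μ n a b hp hp7 hμ hn hn289 ha hb11 hcb
  have hgcd : Nat.gcd m n = 1 := by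
    have hc1 : Nat.Coprime m p := ((hp.coprime_iff_not_dvd).mpr hpm).symm
    have hc2 : Nat.Coprime m (p ^ μ) := Nat.Coprime.pow_right μ hc1
    rw [hn]
    exact hc2
  exact ⟨m, hgcd, key n a b c m t ha4 ha5 hcab (by omega) hab hm1 hcap ht1 ht2 hdvd⟩
end

section
/- Let n = p^μ be a prime power with p ≥ 7, μ ≥ 2, and n ≥ 289. Let b, c be integers with c = b + 1, 3 < n/c < n/b < 4, such that (1, 1, c, n−b, n−3) is a minimal zero-sum sequence over Z/n. Then there exists a unit m modulo n with |m|_n + |m|_n + |m·c|_n + |m·(n−b)|_n + |m·(n−3)|_n = n. -/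
/-- Stern–Brocot style descent: starting from Farey parents `l/u ≤ b/n < (b+1)/n ≤ r/v`,
produce a fraction `k/m` strictly inside `(b/n, (b+1)/n)` together with its parents. -/
private lemma sb_descent (n b : ℕ) :
    ∀ N l u r v A D : ℕ, A + D = N →
    4 ≤ u → 3 ≤ v → (v = 3 → r = 1) →
    r * u = l * v + 1 →
    b * u = l * n + A →
    r * n = (b + 1) * v + D →
    ∃ k m l' u' r' v' A' D' : ℕ,
      4 ≤ u' ∧ 3 ≤ v' ∧ (v' = 3 → r' = 1) ∧
      r' * u' = l' * v' + 1 ∧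
      b * u' = l' * n + A' ∧
      r' * n = (b + 1) * v' + D' ∧
      m = u' + v' ∧ k = l' + r' ∧
      b * m < k * n ∧ k * n < (b + 1) * m := by
  intro N
  induction N using Nat.strong_induction_on with
  | _ N ih =>
    intro l u r v A D hN hu hv hv3 hdet hA hD
    by_cases h1 : (l + r) * n ≤ b * (u + v)
    · have key1 : b * (u + v) + (v + D) = (l + r) * n + A := by
        have e1 : b * (u + v) = b * u + b * v := by ring
        have e2 : (l + r) * n = l * n + r * n := by ring
        have e3 : (b + 1) * v = b * v + v := by ring
        rw [e1, e2, hA, hD, e3]; ring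
      have hle : v + D ≤ A := by linarith
      have hs : (A - (v + D)) + (v + D) = A := Nat.sub_add_cancel hle
      refine ih ((A - (v + D)) + D) (by omega) (l + r) (u + v) r v (A - (v + D)) D rfl
        (by omega) hv hv3 ?_ ?_ hD
      · have : r * (u + v) = l * v + 1 + r * v := by rw [Nat.mul_add, hdet]
        rw [this]; ring
      · linarith
    · by_cases h2 : (b + 1) * (u + v) ≤ (l + r) * n
      · have key2 : (l + r) * n + (A + u) = (b + 1) * (u + v) + D := by
          have e2 : (l + r) * n = l * n + r * n := by ring
          have e4 : (b + 1) * (u + v) = b * u + u + ((b + 1) * v) := by ring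
          rw [e2, hD, e4, hA]; ring
        have hle : A + u ≤ D := by linarith
        have hs : (D - (A + u)) + (A + u) = D := Nat.sub_add_cancel hle
        refine ih (A + (D - (A + u))) (by omega) l u (l + r) (u + v) A (D - (A + u)) rfl
          hu (by omega) (by omega) ?_ hA ?_
        · have : (l + r) * u = l * u + (l * v + 1) := by rw [Nat.add_mul, hdet]
          rw [this]; ring
        · linarith
      · push_neg at h1 h2
        exact ⟨l + r, u + v, l, u, r, v, A, D, hu, hv, hv3, hdet, hA, hD, rfl, rfl, h1, h2⟩

private lemma sb_numeric (m n : ℕ) (h7 : 7 ≤ m) (hmn : 4 * m ≤ n + 16) (hn : 289 ≤ n)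
    (h : n * m ≤ 6 * n + 3 * (m * m)) : False := by
  have P : (0:ℤ) ≤ ((m:ℤ) - 7) * ((n:ℤ) + 16 - 4 * m) := by
    apply mul_nonneg
    · have : (7:ℤ) ≤ m := by exact_mod_cast h7
      linarith
    · have : 4 * (m:ℤ) ≤ n + 16 := by exact_mod_cast hmn
      linarith
  have Q : (0:ℤ) ≤ ((m:ℤ) - 7) * ((n:ℤ) - 289) := by
    apply mul_nonneg
    · have : (7:ℤ) ≤ m := by exact_mod_cast h7
      linarith
    · have : (289:ℤ) ≤ n := by exact_mod_cast hn
      linarith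
  have hZ : (n:ℤ) * m ≤ 6 * n + 3 * (m * m) := by exact_mod_cast h
  have hn' : (289:ℤ) ≤ n := by exact_mod_cast hn
  have h7' : (7:ℤ) ≤ m := by exact_mod_cast h7
  nlinarith [P, Q]

private lemma sb_final (p μ n b m k : ℕ) (hp : p.Prime) (hn : n = p ^ μ)
    (hn289 : 289 ≤ n) (h3c : 3 * (b + 1) < n)
    (hbm : b * m < k * n) (hkn : k * n < (b + 1) * m) (h3m : 3 * m < n)
    (hpm : ¬ p ∣ m) :
    Nat.gcd m n = 1 ∧
      lpr n m + lpr n m + lpr n (m * (b + 1)) + lpr n (m * (n - b)) +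
        lpr n (m * (n - 3)) = n := by
  have hm0 : 0 < m := by
    rcases Nat.eq_zero_or_pos m with h | h
    · subst h; simp at hkn
    · exact h
  have hmn : m < n := by omega
  have hk0 : 0 < k := by
    rcases Nat.eq_zero_or_pos k with h | h
    · subst h; simp at hbm
    · exact h
  have h3k : 3 * k < m := by
    have h1 : (3 * k) * n < (3 * (b + 1)) * m := by
      have : 3 * (k * n) < 3 * ((b + 1) * m) := by omega
      calc (3 * k) * n = 3 * (k * n) := by ring
        _ < 3 * ((b + 1) * m) := this
        _ = (3 * (b + 1)) * m := by ring
    have h2 : (3 * (b + 1)) * m ≤ n * m := Nat.mul_le_mul_right m (le_of_lt h3c)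
    have h3 : (3 * k) * n < n * m := lt_of_lt_of_le h1 h2
    have h4 : n * (3 * k) < n * m := by
      calc n * (3 * k) = (3 * k) * n := by ring
        _ < n * m := h3
    exact lt_of_mul_lt_mul_left h4 (Nat.zero_le n)
  obtain ⟨e0, he0⟩ := Nat.exists_eq_add_of_lt hbm
  obtain ⟨e, he_def⟩ : ∃ x, x = e0 + 1 := ⟨_, rfl⟩
  have he : k * n = b * m + e := by omega
  have he1 : 1 ≤ e := by omega
  obtain ⟨f0, hf0⟩ := Nat.exists_eq_add_of_lt hkn
  obtain ⟨f, hf_def⟩ : ∃ x, x = f0 + 1 := ⟨_, rfl⟩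
  have hf : (b + 1) * m = k * n + f := by omega
  have hf1 : 1 ≤ f := by omega
  have hbm1 : (b + 1) * m = b * m + m := by ring
  have hef : e + f = m := by omega
  have hem : e < m := by omega
  have hfm : f < m := by omega
  have hcop : Nat.Coprime m n := by
    rw [hn]
    exact (Nat.coprime_comm.mp ((Nat.Prime.coprime_iff_not_dvd hp).mpr hpm)).pow_right μ
  have hb_lt : b < n := by omega
  have l1 : lpr n m = m := by
    unfold lpr
    rw [Nat.mod_eq_of_lt hmn, if_neg (by omega)]
  have l2 : lpr n (m * (b + 1)) = f := by
    have hmc : m * (b + 1) = f + k * n := by rw [mul_comm, hf]; ring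
    unfold lpr
    rw [hmc, Nat.add_mul_mod_self_right, Nat.mod_eq_of_lt (by omega), if_neg (by omega)]
  have l3 : lpr n (m * (n - b)) = e := by
    have h1 : m * (n - b) + m * b = m * n := by
      rw [← Nat.mul_add, Nat.sub_add_cancel (le_of_lt hb_lt)]
    have h2 : (m - k) * n + k * n = m * n := by
      rw [← Nat.add_mul, Nat.sub_add_cancel (by omega : k ≤ m)]
    have hcomm : m * b = b * m := by ring
    have key : m * (n - b) = e + (m - k) * n := by
      have := he; linarith
    unfold lpr
    rw [key, Nat.add_mul_mod_self_right, Nat.mod_eq_of_lt (by omega), if_neg (by omega)]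
  have l4 : lpr n (m * (n - 3)) = n - 3 * m := by
    have h1 : m * (n - 3) + m * 3 = m * n := by
      rw [← Nat.mul_add, Nat.sub_add_cancel (by omega : 3 ≤ n)]
    have h2 : (m - 1) * n + n = m * n := by
      calc (m - 1) * n + n = ((m - 1) + 1) * n := by ring
        _ = m * n := by rw [Nat.sub_add_cancel hm0]
    have hcomm : m * 3 = 3 * m := by ring
    have key : m * (n - 3) = (n - 3 * m) + (m - 1) * n := by
      have h3 : (n - 3 * m) + 3 * m = n := Nat.sub_add_cancel (le_of_lt h3m)
      linarith
    unfold lpr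
    rw [key, Nat.add_mul_mod_self_right, Nat.mod_eq_of_lt (by omega), if_neg (by omega)]
  refine ⟨hcop, ?_⟩
  rw [l1, l2, l3, l4]
  omega

set_option maxHeartbeats 1600000 in
theorem stmt_16 (p μ n b c : ℕ) (hp : p.Prime) (hp7 : 7 ≤ p) (hμ : 2 ≤ μ)
    (hn : n = p ^ μ) (hn289 : 289 ≤ n)
    (hbc : c = b + 1) (h3c : 3 * c < n) (h4b : n < 4 * b)
    (hzs : n ∣ ∑ i, (![1, 1, c, n - b, n - 3] : Fin 5 → ℕ) i)
    (hmin : ∀ s : Finset (Fin 5), s.Nonempty → s ≠ Finset.univ →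
      ¬ n ∣ ∑ i ∈ s, (![1, 1, c, n - b, n - 3] : Fin 5 → ℕ) i) :
    ∃ m : ℕ, Nat.gcd m n = 1 ∧
      lpr n m + lpr n m + lpr n (m * c) + lpr n (m * (n - b)) +
        lpr n (m * (n - 3)) = n := by
  subst hbc
  clear hzs hmin
  obtain ⟨k, m, l, u, r, v, A, D, hu, hv, hv3, hdet, hA, hD, hm, hk, hbm, hkn⟩ :=
    sb_descent n b ((4 * b - n) + (n - 3 * (b + 1))) 1 4 1 3 (4 * b - n) (n - 3 * (b + 1)) rfl
      (le_refl 4) (le_refl 3) (fun _ => rfl) (by norm_num) (by omega) (by omega)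
  have hdetn : u * D + v * A + u * v = n := by
    have h1 : (l * v + 1) * n = u * ((b + 1) * v) + u * D := by
      rw [← hdet]
      calc r * u * n = u * (r * n) := by ring
        _ = u * ((b + 1) * v + D) := by rw [hD]
        _ = u * ((b + 1) * v) + u * D := by ring
    have h2 : v * (b * u) = v * (l * n) + v * A := by rw [hA]; ring
    have h3 : (l * v + 1) * n = l * v * n + n := by ring
    have h4 : u * ((b + 1) * v) = v * (b * u) + u * v := by ring
    have h5 : v * (l * n) = l * v * n := by ring
    linarith
  have huvn : u * v ≤ n := by linarith [Nat.zero_le (u * D), Nat.zero_le (v * A)]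
  have hm416 : 4 * m ≤ n + 16 := by
    rcases eq_or_lt_of_le hv with hv3' | hv4
    · have hr1 : r = 1 := hv3 hv3'.symm
      have hu31 : u = 3 * l + 1 := by
        rw [hr1, ← hv3'] at hdet; omega
      have h4l : 4 * l ≤ b := by
        have hln : l * n ≤ b * u := by linarith
        have hlow : l * (3 * b + 4) ≤ l * n :=
          Nat.mul_le_mul_left l (by omega)
        rw [hu31] at hln
        have e1 : b * (3 * l + 1) = 3 * (l * b) + b := by ring
        have e2 : l * (3 * b + 4) = 3 * (l * b) + 4 * l := by ring
        linarith
      omega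
    · have hv4' : 4 ≤ v := hv4
      obtain ⟨a, rfl⟩ := Nat.exists_eq_add_of_le hu
      obtain ⟨d, rfl⟩ := Nat.exists_eq_add_of_le hv4'
      have hq : 4 * ((4 + a) + (4 + d)) ≤ (4 + a) * (4 + d) + 16 := by
        nlinarith [Nat.zero_le (a * d)]
      omega
  have h3m : 3 * m < n := by omega
  obtain ⟨e0, he0⟩ := Nat.exists_eq_add_of_lt hbm
  obtain ⟨e, he_def⟩ : ∃ x, x = e0 + 1 := ⟨_, rfl⟩
  have he : k * n = b * m + e := by omega
  have he1 : 1 ≤ e := by omega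
  obtain ⟨f0, hf0⟩ := Nat.exists_eq_add_of_lt hkn
  obtain ⟨f, hf_def⟩ : ∃ x, x = f0 + 1 := ⟨_, rfl⟩
  have hf : (b + 1) * m = k * n + f := by omega
  have hf1 : 1 ≤ f := by omega
  have hbme : (b + 1) * m = b * m + m := by ring
  have hef : e + f = m := by omega
  by_cases hpm : p ∣ m
  · -- fallback: p divides m, use j-fold mediants
    have hm7 : 7 ≤ m := le_trans hp7 (Nat.le_of_dvd (by omega) hpm)
    have hpu : ¬ p ∣ u := by
      intro hpu
      have hpv : p ∣ v := by
        have : p ∣ u + v := hm ▸ hpm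
        exact (Nat.dvd_add_right hpu).mp this
      have h1 : p ∣ r * u := Dvd.dvd.mul_left hpu r
      have h2 : p ∣ l * v := Dvd.dvd.mul_left hpv l
      rw [hdet] at h1
      have : p ∣ 1 := (Nat.dvd_add_right h2).mp h1
      have := Nat.le_of_dvd one_pos this
      omega
    have hpv : ¬ p ∣ v := by
      intro hpv
      have hpu2 : p ∣ u := by
        have : p ∣ u + v := hm ▸ hpm
        exact (Nat.dvd_add_iff_left hpv).mpr this
      exact hpu hpu2
    -- relations
    have heA : e + A = v + D := by
      have h1 : (l + r) * n = b * (u + v) + e := by rw [← hk, ← hm]; exact he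
      have h2 : (l + r) * n = l * n + r * n := by ring
      have h3 : b * (u + v) = b * u + b * v := by ring
      have h4 : (b + 1) * v = b * v + v := by ring
      linarith
    have hfD : f + D = u + A := by
      have h1 : (b + 1) * (u + v) = (l + r) * n + f := by rw [← hk, ← hm]; exact hf
      have h2 : (l + r) * n = l * n + r * n := by ring
      have h3 : (b + 1) * (u + v) = b * u + u + (b * v + v) := by ring
      have h4 : (b + 1) * v = b * v + v := by ring
      linarith
    -- candidate 1
    obtain ⟨j1, hj1_def⟩ : ∃ j, j = A / e + 1 := ⟨_, rfl⟩
    obtain ⟨m1, hm1_def⟩ : ∃ x, x = j1 * m + u := ⟨_, rfl⟩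
    obtain ⟨k1, hk1_def⟩ : ∃ x, x = j1 * k + l := ⟨_, rfl⟩
    have hj1 : A + 1 ≤ j1 * e := by
      have hdm : e * (A / e) + A % e = A := Nat.div_add_mod A e
      have hml : A % e < e := Nat.mod_lt _ (by omega)
      have hje : j1 * e = e * (A / e) + e := by rw [hj1_def]; ring
      omega
    have hA1 : j1 * e ≤ A + e := by
      have := Nat.div_mul_le_self A e
      have hje : j1 * e = A / e * e + e := by rw [hj1_def]; ring
      omega
    have hbm1 : b * m1 < k1 * n := by
      have h1 : k1 * n = j1 * (k * n) + l * n := by rw [hk1_def]; ring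
      have h2 : j1 * (k * n) = j1 * (b * m) + j1 * e := by rw [he]; ring
      have h3 : b * m1 = j1 * (b * m) + b * u := by rw [hm1_def]; ring
      linarith
    have hkn1 : k1 * n < (b + 1) * m1 := by
      have h1 : k1 * n = j1 * (k * n) + l * n := by rw [hk1_def]; ring
      have h2 : (b + 1) * m1 = j1 * ((b + 1) * m) + (b + 1) * u := by rw [hm1_def]; ring
      have h3 : j1 * ((b + 1) * m) = j1 * (k * n) + j1 * f := by rw [hf]; ring
      have h4 : (b + 1) * u = b * u + u := by ring
      linarith [Nat.zero_le (j1 * f)]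
    have hpm1 : ¬ p ∣ m1 := by
      intro hdvd
      have h1 : p ∣ j1 * m := Dvd.dvd.mul_left hpm j1
      exact hpu ((Nat.dvd_add_right h1).mp (hm1_def ▸ hdvd))
    -- candidate 2
    obtain ⟨j2, hj2_def⟩ : ∃ j, j = D / f + 1 := ⟨_, rfl⟩
    obtain ⟨m2, hm2_def⟩ : ∃ x, x = j2 * m + v := ⟨_, rfl⟩
    obtain ⟨k2, hk2_def⟩ : ∃ x, x = j2 * k + r := ⟨_, rfl⟩
    have hj2 : D + 1 ≤ j2 * f := by
      have hdm : f * (D / f) + D % f = D := Nat.div_add_mod D f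
      have hml : D % f < f := Nat.mod_lt _ (by omega)
      have hje : j2 * f = f * (D / f) + f := by rw [hj2_def]; ring
      omega
    have hD1 : j2 * f ≤ D + f := by
      have := Nat.div_mul_le_self D f
      have hje : j2 * f = D / f * f + f := by rw [hj2_def]; ring
      omega
    have hbm2 : b * m2 < k2 * n := by
      have h1 : k2 * n = j2 * (k * n) + r * n := by rw [hk2_def]; ring
      have h2 : j2 * (k * n) = j2 * (b * m) + j2 * e := by rw [he]; ring
      have h3 : b * m2 = j2 * (b * m) + b * v := by rw [hm2_def]; ring
      have h4 : (b + 1) * v = b * v + v := by ring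
      linarith [Nat.zero_le (j2 * e), hv]
    have hkn2 : k2 * n < (b + 1) * m2 := by
      have h1 : k2 * n = j2 * (k * n) + r * n := by rw [hk2_def]; ring
      have h2 : (b + 1) * m2 = j2 * ((b + 1) * m) + (b + 1) * v := by rw [hm2_def]; ring
      have h3 : j2 * ((b + 1) * m) = j2 * (k * n) + j2 * f := by rw [hf]; ring
      have h4 : (b + 1) * v = b * v + v := by ring
      linarith [Nat.zero_le (j2 * e), Nat.zero_le (b * v)]
    have hpm2 : ¬ p ∣ m2 := by
      intro hdvd
      have h1 : p ∣ j2 * m := Dvd.dvd.mul_left hpm j2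
      exact hpv ((Nat.dvd_add_right h1).mp (hm2_def ▸ hdvd))
    -- one of the two candidates is small
    have hsmall : 3 * m1 < n ∨ 3 * m2 < n := by
      by_contra hcon
      push_neg at hcon
      obtain ⟨hbig1, hbig2⟩ := hcon
      have I1 : n * e ≤ 3 * ((A + e) * m) + 3 * (u * e) := by
        have s1 : n * e ≤ (3 * m1) * e := Nat.mul_le_mul_right e hbig1
        have s2 : (3 * m1) * e = 3 * ((j1 * e) * m) + 3 * (u * e) := by rw [hm1_def]; ring
        have s3 : (j1 * e) * m ≤ (A + e) * m := Nat.mul_le_mul_right m hA1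
        linarith
      have I2 : n * f ≤ 3 * ((D + f) * m) + 3 * (v * f) := by
        have s1 : n * f ≤ (3 * m2) * f := Nat.mul_le_mul_right f hbig2
        have s2 : (3 * m2) * f = 3 * ((j2 * f) * m) + 3 * (v * f) := by rw [hm2_def]; ring
        have s3 : (j2 * f) * m ≤ (D + f) * m := Nat.mul_le_mul_right m hD1
        linarith
      have hue : u * e + u * A = u * v + u * D := by
        have h1 : u * (e + A) = u * (v + D) := by rw [heA]
        have h2 : u * (e + A) = u * e + u * A := by ring
        have h3 : u * (v + D) = u * v + u * D := by ring
        linarith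
      have hvf : v * f + v * D = v * u + v * A := by
        have h1 : v * (f + D) = v * (u + A) := by rw [hfD]
        have h2 : v * (f + D) = v * f + v * D := by ring
        have h3 : v * (u + A) = v * u + v * A := by ring
        linarith
      have hkey : n * m ≤ 6 * n + 3 * (m * m) := by
        have q1 : (A + e) * m = A * m + e * m := by ring
        have q2 : (D + f) * m = D * m + f * m := by ring
        have q3 : n * e + n * f = n * m := by
          have h1 : n * (e + f) = n * m := by rw [hef]
          have h2 : n * (e + f) = n * e + n * f := by ring
          linarith
        have q4 : e * m + f * m = m * m := by
          have h1 : (e + f) * m = m * m := by rw [hef]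
          have h2 : (e + f) * m = e * m + f * m := by ring
          linarith
        have hmA : A * m = u * A + v * A := by rw [hm]; ring
        have hmD : D * m = u * D + v * D := by rw [hm]; ring
        have hvu : v * u = u * v := by ring
        linarith [hdetn]
      exact sb_numeric m n hm7 hm416 hn289 hkey
    rcases hsmall with hs | hs
    · exact ⟨m1, sb_final p μ n b m1 k1 hp hn hn289 h3c hbm1 hkn1 hs hpm1⟩
    · exact ⟨m2, sb_final p μ n b m2 k2 hp hn hn289 h3c hbm2 hkn2 hs hpm2⟩
  · exact ⟨m, sb_final p μ n b m k hp hn hn289 h3c hbm hkn h3m hpm⟩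
end

section
/- Let n be odd, and let a, b, c, with 3 ≤ a ≤ b < c < n/2 and c = a + b − 2. Then the 5-tuple (1, 1, c, n−b, n−a) is a zero-sum sequence over Z/n (its entries sum to 2n), and every minimal zero-sum sequence of the form (1, 1, x3, x4, x5) over Z/n with 1 + 1 + x3 + x4 + x5 = 2n and x3, x4, x5 ∈ [2, n−1] can, after reordering, be written in this form with suitable a, b, c satisfying 3 ≤ a ≤ b, c = a + b − 2 — unless it already has index 1. -/
lemma lpr_big (n x : ℕ) (h1 : n < 2*x) (h2 : 2*x < 2*n) : lpr n (2*x) = 2*x - n := by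
  have hm : (2*x) % n = 2*x - n := by
    rw [Nat.mod_eq_sub_mod (by omega), Nat.mod_eq_of_lt (by omega)]
  unfold lpr
  rw [hm, if_neg (by omega)]

lemma lpr_two (n : ℕ) (h : 5 ≤ n) : lpr n 2 = 2 := by
  unfold lpr
  rw [Nat.mod_eq_of_lt (by omega), if_neg (by omega)]

/-- The key construction in the "exactly one small element" case. -/
lemma key_helper (n c p q : ℕ) (hn : 5 ≤ n) (hc : 2*c < n) (hp : n < 2*p) (hq : n < 2*q)
    (hp3 : p + 3 ≤ n) (hq3 : q + 3 ≤ n) (hc2 : 2 ≤ c) (hsum : c + p + q = 2*n - 2) :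
    ∃ a b : ℕ, 3 ≤ a ∧ a ≤ b ∧ b < c ∧ 2*c < n ∧ c = a + b - 2 ∧
      ({c, p, q} : Multiset ℕ) = {c, n - b, n - a} := by
  rcases le_total p q with h | h
  · refine ⟨n - q, n - p, by omega, by omega, by omega, hc, by omega, ?_⟩
    rw [show n - (n - p) = p by omega, show n - (n - q) = q by omega]
  · refine ⟨n - p, n - q, by omega, by omega, by omega, hc, by omega, ?_⟩
    rw [show n - (n - q) = q by omega, show n - (n - p) = p by omega]
    exact congrArg (c ::ₘ ·) (Multiset.cons_swap p q 0)

theorem stmt_18 (n : ℕ) (hodd : Odd n) :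
    (∀ a b c : ℕ, 3 ≤ a → a ≤ b → b < c → 2 * c < n → c = a + b - 2 →
      1 + 1 + c + (n - b) + (n - a) = 2 * n) ∧
    (∀ x3 x4 x5 : ℕ,
      2 ≤ x3 → x3 ≤ n - 1 → 2 ≤ x4 → x4 ≤ n - 1 → 2 ≤ x5 → x5 ≤ n - 1 →
      1 + 1 + x3 + x4 + x5 = 2 * n →
      (∀ s : Finset (Fin 5), s.Nonempty → s ≠ Finset.univ →
        ¬ n ∣ ∑ i ∈ s, (![1, 1, x3, x4, x5] : Fin 5 → ℕ) i) →
      (∃ m : ℕ, Nat.gcd m n = 1 ∧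
          lpr n m + lpr n m + lpr n (m * x3) + lpr n (m * x4) +
            lpr n (m * x5) = n) ∨
      ∃ a b c : ℕ, 3 ≤ a ∧ a ≤ b ∧ b < c ∧ 2 * c < n ∧ c = a + b - 2 ∧
        ({x3, x4, x5} : Multiset ℕ) = {c, n - b, n - a}) := by
  obtain ⟨k, hk⟩ := hodd
  constructor
  · intro a b c h1 h2 h3 h4 h5
    omega
  · intro x3 x4 x5 h32 h3u h42 h4u h52 h5u hsum hmin
    have hn5 : 5 ≤ n := by omega
    -- derive xi ≤ n - 3 from minimality
    have d3a : ¬ n ∣ (1 + x3) := by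
      simpa using hmin {0, 2} ⟨0, by decide⟩ (by decide)
    have d3b : ¬ n ∣ (1 + (1 + x3)) := by
      simpa using hmin {0, 1, 2} ⟨0, by decide⟩ (by decide)
    have d4a : ¬ n ∣ (1 + x4) := by
      simpa using hmin {0, 3} ⟨0, by decide⟩ (by decide)
    have d4b : ¬ n ∣ (1 + (1 + x4)) := by
      simpa using hmin {0, 1, 3} ⟨0, by decide⟩ (by decide)
    have d5a : ¬ n ∣ (1 + x5) := by
      simpa using hmin {0, 4} ⟨0, by decide⟩ (by decide)
    have d5b : ¬ n ∣ (1 + (1 + x5)) := by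
      simpa using hmin {0, 1, 4} ⟨0, by decide⟩ (by decide)
    have h3t : x3 + 3 ≤ n := by
      rcases (by omega : x3 + 3 ≤ n ∨ x3 = n - 1 ∨ x3 = n - 2) with h | h | h
      · exact h
      · exact absurd ⟨1, by omega⟩ d3a
      · exact absurd ⟨1, by omega⟩ d3b
    have h4t : x4 + 3 ≤ n := by
      rcases (by omega : x4 + 3 ≤ n ∨ x4 = n - 1 ∨ x4 = n - 2) with h | h | h
      · exact h
      · exact absurd ⟨1, by omega⟩ d4a
      · exact absurd ⟨1, by omega⟩ d4b
    have h5t : x5 + 3 ≤ n := by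
      rcases (by omega : x5 + 3 ≤ n ∨ x5 = n - 1 ∨ x5 = n - 2) with h | h | h
      · exact h
      · exact absurd ⟨1, by omega⟩ d5a
      · exact absurd ⟨1, by omega⟩ d5b
    -- case analysis on which xi are below n/2
    by_cases c3 : 2 * x3 < n <;> by_cases c4 : 2 * x4 < n <;> by_cases c5 : 2 * x5 < n
    · omega
    · omega
    · omega
    · -- only x3 small
      obtain ⟨a, b, h1, h2, h3, h4, h5, h6⟩ :=
        key_helper n x3 x4 x5 hn5 c3 (by omega) (by omega) h4t h5t h32 (by omega)
      exact Or.inr ⟨a, b, x3, h1, h2, h3, h4, h5, h6⟩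
    · omega
    · -- only x4 small
      obtain ⟨a, b, h1, h2, h3, h4, h5, h6⟩ :=
        key_helper n x4 x3 x5 hn5 c4 (by omega) (by omega) h3t h5t h42 (by omega)
      refine Or.inr ⟨a, b, x4, h1, h2, h3, h4, h5, ?_⟩
      rw [show ({x3, x4, x5} : Multiset ℕ) = {x4, x3, x5} from Multiset.cons_swap _ _ _]
      exact h6
    · -- only x5 small
      obtain ⟨a, b, h1, h2, h3, h4, h5, h6⟩ :=
        key_helper n x5 x3 x4 hn5 c5 (by omega) (by omega) h3t h4t h52 (by omega)
      refine Or.inr ⟨a, b, x5, h1, h2, h3, h4, h5, ?_⟩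
      rw [show ({x3, x4, x5} : Multiset ℕ) = {x3, x5, x4} from
            congrArg (x3 ::ₘ ·) (Multiset.cons_swap _ _ _),
          show ({x3, x5, x4} : Multiset ℕ) = {x5, x3, x4} from Multiset.cons_swap _ _ _]
      exact h6
    · -- all big: m = 2 gives index 1
      refine Or.inl ⟨2, Nat.coprime_two_left.mpr ⟨k, hk⟩, ?_⟩
      rw [show (2 : ℕ) = 2 * 1 by ring] at *
      rw [lpr_two n hn5, lpr_big n x3 (by omega) (by omega),
          lpr_big n x4 (by omega) (by omega), lpr_big n x5 (by omega) (by omega)]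
      omega
end
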